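/- arXiv:0711.2134 — 3 statements merged into one kernel-verified Lean document; each statement's English description precedes it below -/
import Mathlib

section
/- Exponential decay of the Toda soliton profile and its neutral modes: Let c > 1 and κ = κ(c). There exists C > 0 such that |r̃_c(x)| + |p̃_c(x)| ≤ C e^{−2κ|x|} for all x ∈ ℝ. Consequently, for every γ ∈ ℝ and every a ∈ (0, 2κ), the sequence n ↦ ũ_c(n − cγ) belongs to ℓ²_a ∩ ℓ²_{−a}; moreover the sequences n ↦ u̇_c(γ)(n) and n ↦ ∂_c u_c(γ)(n) belong to ℓ²_a ∩ ℓ²_{−a}, and J⁻¹u̇_c(γ) and J⁻¹∂_c u_c(γ) belong to ℓ²_{−a}. -/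
open Real Filter Set MeasureTheory

namespace TodaPaper

noncomputable section

/-- The squared Euclidean norm on `ℝ × ℝ`. -/
def nsq (w : ℝ × ℝ) : ℝ := w.1 ^ 2 + w.2 ^ 2

/-- Membership in `ℓ²(ℤ; ℝ²)`. -/
def Meml2 (u : ℤ → ℝ × ℝ) : Prop := Summable fun n : ℤ => nsq (u n)

/-- The `ℓ²(ℤ; ℝ²)` norm. -/
def l2norm (u : ℤ → ℝ × ℝ) : ℝ := Real.sqrt (∑' n : ℤ, nsq (u n))

/-- Membership in the exponentially weighted space `ℓ²_a`. -/
def Meml2w (a : ℝ) (u : ℤ → ℝ × ℝ) : Prop :=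
  Summable fun n : ℤ => Real.exp (2 * a * n) * nsq (u n)

/-- The `ℓ²_a` norm. -/
def wnorm (a : ℝ) (u : ℤ → ℝ × ℝ) : ℝ :=
  Real.sqrt (∑' n : ℤ, Real.exp (2 * a * n) * nsq (u n))

/-- The Toda potential `V(r) = e^{-r} - 1 + r`. -/
def V (r : ℝ) : ℝ := Real.exp (-r) - 1 + r

/-- Derivative of the Toda potential, `V'(r) = 1 - e^{-r}`. -/
def V' (r : ℝ) : ℝ := 1 - Real.exp (-r)

/-- `u = (r, p)` is a solution of the Toda lattice. -/
structure IsTodaSolution (u : ℝ → ℤ → ℝ × ℝ) : Prop where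
  mem : ∀ t, Meml2 (u t)
  dr : ∀ t n, HasDerivAt (fun s => (u s n).1) ((u t (n + 1)).2 - (u t n).2) t
  dp : ∀ t n, HasDerivAt (fun s => (u s n).2) (V' (u t n).1 - V' (u t (n - 1)).1) t

/-- The decay rate `κ(c)`, the (unique, for `c > 1`) positive root of `sinh κ = c κ`. -/
def kappa (c : ℝ) : ℝ := Classical.epsilon fun k : ℝ => 0 < k ∧ Real.sinh k = c * k

/-- The soliton displacement profile `q̃_c`. -/
def qt (c x : ℝ) : ℝ := Real.log (Real.cosh (kappa c * (x - 1)) / Real.cosh (kappa c * x))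

/-- The soliton momentum profile `p̃_c = -c q̃_c'`. -/
def ptil (c : ℝ) : ℝ → ℝ := fun x => -c * deriv (qt c) x

/-- The soliton relative-displacement profile `r̃_c(x) = q̃_c(x+1) - q̃_c(x)`. -/
def rtil (c : ℝ) : ℝ → ℝ := fun x => qt c (x + 1) - qt c x

/-- The soliton profile `ũ_c = (r̃_c, p̃_c)`. -/
def solProfile (c : ℝ) (x : ℝ) : ℝ × ℝ := (rtil c x, ptil c x)

/-- The soliton `u_c(γ)(n) = ũ_c(n - cγ)`. -/
def uc (c γ : ℝ) : ℤ → ℝ × ℝ := fun n => solProfile c ((n : ℝ) - c * γ)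

/-- The neutral mode `u̇_c(γ)(n) = -c ũ_c'(n - cγ)`. -/
def ucDot (c γ : ℝ) : ℤ → ℝ × ℝ := fun n => (-c) • deriv (solProfile c) ((n : ℝ) - c * γ)

/-- The neutral mode `∂_c u_c(γ)(n)`. -/
def ucDc (c γ : ℝ) : ℤ → ℝ × ℝ := fun n => deriv (fun c' => solProfile c' ((n : ℝ) - c' * γ)) c

/-- The `ℓ²` pairing `⟨u, v⟩ = Σ_n (u₁ v₁ + u₂ v₂)`. -/
def pairing (u v : ℤ → ℝ × ℝ) : ℝ := ∑' n : ℤ, ((u n).1 * (v n).1 + (u n).2 * (v n).2)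

/-- The operator `J⁻¹ : (r,p) ↦ (Σ_{k=0}^∞ p(·-k), Σ_{k=1}^∞ r(·-k))`. -/
def Jinv (u : ℤ → ℝ × ℝ) : ℤ → ℝ × ℝ := fun n =>
  (∑' k : ℕ, (u (n - (k : ℤ))).2, ∑' k : ℕ, (u (n - 1 - (k : ℤ))).1)

lemma sinh_lt_mul_cosh {x : ℝ} (hx : 0 < x) : Real.sinh x < x * Real.cosh x := by
  have hF : ∀ y : ℝ, HasDerivAt (fun y => y * Real.cosh y - Real.sinh y) (y * Real.sinh y) y := by
    intro y
    have h := ((hasDerivAt_id y).mul (Real.hasDerivAt_cosh y)).sub (Real.hasDerivAt_sinh y)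
    have e : (fun y => y * Real.cosh y - Real.sinh y) = (id * Real.cosh - Real.sinh) := by
      funext z; simp
    rw [e]; exact h.congr_deriv (by simp)
  have hmono : StrictMonoOn (fun y => y * Real.cosh y - Real.sinh y) (Ici 0) := by
    refine strictMonoOn_of_deriv_pos (convex_Ici 0)
      ((continuous_id.mul Real.continuous_cosh).sub Real.continuous_sinh).continuousOn ?_
    intro y hy
    rw [interior_Ici, mem_Ioi] at hy
    rw [(hF y).deriv]
    exact mul_pos hy (Real.sinh_pos_iff.mpr hy)
  have := hmono (self_mem_Ici) (mem_Ici.mpr hx.le) hx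
  simpa using this

lemma g_strictMono : StrictMonoOn (fun k => Real.sinh k / k) (Ioi 0) := by
  have hg : ∀ y ∈ Ioi (0:ℝ), HasDerivAt (fun k => Real.sinh k / k)
      ((Real.cosh y * y - Real.sinh y * 1) / (y ^ 2)) y := by
    intro y hy
    exact (Real.hasDerivAt_sinh y).div (hasDerivAt_id y) (ne_of_gt hy)
  refine strictMonoOn_of_deriv_pos (convex_Ioi 0)
    (ContinuousOn.div Real.continuous_sinh.continuousOn continuousOn_id
      (fun y hy => ne_of_gt hy)) ?_
  intro y hy
  rw [interior_Ioi, mem_Ioi] at hy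
  rw [(hg y hy).deriv]
  have := sinh_lt_mul_cosh hy
  have h2 : (0:ℝ) < y ^ 2 := by positivity
  apply div_pos ?_ h2
  nlinarith

lemma exists_kappa {c : ℝ} (hc : 1 < c) : ∃ k : ℝ, 0 < k ∧ Real.sinh k = c * k := by
  have hlogc : 0 < Real.log c := Real.log_pos hc
  set k₀ : ℝ := Real.log c / 2 with hk₀def
  have hk₀ : 0 < k₀ := by positivity
  -- f k₀ < 0
  have hcoshk₀ : Real.cosh k₀ < c := by
    have h1 : Real.cosh k₀ ≤ Real.exp k₀ := by
      rw [Real.cosh_eq]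
      have := Real.exp_le_exp.mpr (show -k₀ ≤ k₀ by linarith)
      linarith
    have h2 : Real.exp k₀ < Real.exp (Real.log c) := Real.exp_lt_exp.mpr (by linarith)
    rw [Real.exp_log (by linarith : (0:ℝ) < c)] at h2
    linarith
  have hlow : Real.sinh k₀ - c * k₀ < 0 := by
    have := sinh_lt_mul_cosh hk₀
    nlinarith
  -- big point
  set s : ℝ := Real.sqrt (2 * c) with hsdef
  have hs : 0 < s := Real.sqrt_pos.mpr (by linarith)
  have hs2 : s ^ 2 = 2 * c := Real.sq_sqrt (by linarith)
  have hcoshs : c < Real.cosh s := by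
    have h1 : Real.cosh s = 1 + 2 * Real.sinh (s/2) ^ 2 := by
      have := Real.cosh_two_mul (s/2)
      have h2 := Real.cosh_sq_sub_sinh_sq (s/2)
      have : Real.cosh (2 * (s/2)) = Real.cosh (s/2) ^ 2 + Real.sinh (s/2) ^ 2 := this
      rw [show 2 * (s/2) = s by ring] at this
      nlinarith
    have h3 : s/2 ≤ Real.sinh (s/2) := Real.self_le_sinh_iff.mpr (by positivity)
    nlinarith
  set k₁ : ℝ := max (2 * s) (k₀ + 1) with hk₁def
  have hk₁s : 2 * s ≤ k₁ := le_max_left _ _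
  have hk₀k₁ : k₀ < k₁ := lt_of_lt_of_le (by linarith) (le_max_right _ _)
  have hhigh : 0 ≤ Real.sinh k₁ - c * k₁ := by
    have h2s : Real.sinh (2 * s) = 2 * Real.sinh s * Real.cosh s := Real.sinh_two_mul s
    have hss : s ≤ Real.sinh s := Real.self_le_sinh_iff.mpr hs.le
    have hcoshpos : 0 < Real.cosh s := Real.cosh_pos s
    have h2sbound : c * (2 * s) ≤ Real.sinh (2 * s) := by nlinarith
    -- use monotonicity of sinh k / k
    have h1 : (0:ℝ) < 2 * s := by linarith
    have hk₁pos : (0:ℝ) < k₁ := lt_of_lt_of_le h1 hk₁s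
    rcases eq_or_lt_of_le hk₁s with h | h
    · rw [← h]; linarith
    · have := g_strictMono (mem_Ioi.mpr h1) (mem_Ioi.mpr hk₁pos) h
      have hgs : c ≤ Real.sinh (2*s) / (2*s) := by
        rw [le_div_iff₀ h1]; linarith
      have : c < Real.sinh k₁ / k₁ := lt_of_le_of_lt hgs this
      rw [lt_div_iff₀ hk₁pos] at this
      linarith
  -- IVT
  have hcont : ContinuousOn (fun k => Real.sinh k - c * k) (Icc k₀ k₁) :=
    (Real.continuous_sinh.sub (continuous_const.mul continuous_id)).continuousOn
  have := intermediate_value_Icc hk₀k₁.le hcont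
  have hmem : (0:ℝ) ∈ Icc (Real.sinh k₀ - c * k₀) (Real.sinh k₁ - c * k₁) :=
    ⟨hlow.le, hhigh⟩
  obtain ⟨k, hkmem, hk⟩ := this hmem
  have hk' : Real.sinh k - c * k = 0 := hk
  exact ⟨k, lt_of_lt_of_le hk₀ hkmem.1, by linarith⟩

lemma kappa_spec {c : ℝ} (hc : 1 < c) : 0 < kappa c ∧ Real.sinh (kappa c) = c * kappa c :=
  Classical.epsilon_spec (exists_kappa hc)

lemma kappa_pos {c : ℝ} (hc : 1 < c) : 0 < kappa c := (kappa_spec hc).1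
lemma kappa_sinh {c : ℝ} (hc : 1 < c) : Real.sinh (kappa c) = c * kappa c := (kappa_spec hc).2

lemma cosh_kappa_gt {c : ℝ} (hc : 1 < c) : c < Real.cosh (kappa c) := by
  have h1 := sinh_lt_mul_cosh (kappa_pos hc)
  rw [kappa_sinh hc] at h1
  have := kappa_pos hc
  nlinarith

lemma g_gt_one {k : ℝ} (hk : 0 < k) : 1 < Real.sinh k / k := by
  rw [lt_div_iff₀ hk]
  simpa using Real.self_lt_sinh_iff.mpr hk

lemma g_kappa {c : ℝ} (hc : 1 < c) : Real.sinh (kappa c) / kappa c = c := by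
  rw [kappa_sinh hc, mul_div_assoc, div_self (kappa_pos hc).ne', mul_one]


lemma kappa_unique {c k : ℝ} (hc : 1 < c) (hk : 0 < k) (h : Real.sinh k = c * k) :
    k = kappa c := by
  have h1 : Real.sinh k / k = Real.sinh (kappa c) / kappa c := by
    rw [g_kappa hc, h, mul_div_assoc, div_self hk.ne', mul_one]
  exact g_strictMono.injOn (mem_Ioi.mpr hk) (mem_Ioi.mpr (kappa_pos hc)) h1

lemma kappa_continuousAt {c : ℝ} (hc : 1 < c) : ContinuousAt kappa c := by
  rw [Metric.continuousAt_iff]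
  intro ε hε
  set κ := kappa c with hκdef
  have hκ : 0 < κ := kappa_pos hc
  set ε' : ℝ := min (ε / 2) (κ / 2) with hε'def
  have hε' : 0 < ε' := lt_min (by linarith) (by linarith)
  have hε'κ : ε' < κ := lt_of_le_of_lt (min_le_right _ _) (by linarith)
  have hlo : 0 < κ - ε' := by linarith
  have h1 : Real.sinh (κ - ε') / (κ - ε') < c := by
    rw [← g_kappa hc]
    exact g_strictMono (mem_Ioi.mpr hlo) (mem_Ioi.mpr hκ) (by linarith)
  have h2 : c < Real.sinh (κ + ε') / (κ + ε') := by
    rw [← g_kappa hc]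
    exact g_strictMono (mem_Ioi.mpr hκ) (mem_Ioi.mpr (by linarith)) (by linarith)
  set δ : ℝ := min (c - Real.sinh (κ - ε') / (κ - ε')) (Real.sinh (κ + ε') / (κ + ε') - c)
  have hδ : 0 < δ := lt_min (by linarith) (by linarith)
  refine ⟨δ, hδ, ?_⟩
  intro c' hc'
  rw [Real.dist_eq] at hc' ⊢
  have hc'lo : Real.sinh (κ - ε') / (κ - ε') < c' := by
    have := abs_lt.mp hc'
    have h3 : δ ≤ c - Real.sinh (κ - ε') / (κ - ε') := min_le_left _ _
    linarith [this.1]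
  have hc'hi : c' < Real.sinh (κ + ε') / (κ + ε') := by
    have := abs_lt.mp hc'
    have h3 : δ ≤ Real.sinh (κ + ε') / (κ + ε') - c := min_le_right _ _
    linarith [this.2]
  have hc'1 : 1 < c' := lt_trans (g_gt_one hlo) hc'lo
  have hκ' : 0 < kappa c' := kappa_pos hc'1
  have hg' : Real.sinh (kappa c') / kappa c' = c' := g_kappa hc'1
  -- kappa c' < κ + ε'
  have hup : kappa c' < κ + ε' := by
    by_contra h
    push_neg at h
    rcases eq_or_lt_of_le h with h' | h'
    · rw [← h'] at hg'; linarith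
    · have h5 := g_strictMono (mem_Ioi.mpr (by linarith : (0:ℝ) < κ + ε')) (mem_Ioi.mpr hκ') h'
      have h6 : Real.sinh (κ + ε') / (κ + ε') < Real.sinh (kappa c') / kappa c' := h5
      rw [hg'] at h6; linarith
  have hdown : κ - ε' < kappa c' := by
    by_contra h
    push_neg at h
    rcases eq_or_lt_of_le h with h' | h'
    · rw [h'] at hg'; linarith
    · have h5 := g_strictMono (mem_Ioi.mpr hκ') (mem_Ioi.mpr hlo) h'
      have h6 : Real.sinh (kappa c') / kappa c' < Real.sinh (κ - ε') / (κ - ε') := h5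
      rw [hg'] at h6; linarith
  have : |kappa c' - κ| < ε' := abs_lt.mpr ⟨by linarith, by linarith⟩
  have : ε' ≤ ε / 2 := min_le_left _ _
  linarith [abs_lt.mp (by assumption : |kappa c' - κ| < ε')]

lemma hasDerivAt_kappa {c : ℝ} (hc : 1 < c) :
    HasDerivAt kappa (((Real.cosh (kappa c) - c) / kappa c)⁻¹) c := by
  set κ := kappa c with hκdef
  have hκ : 0 < κ := kappa_pos hc
  have hg : HasDerivAt (fun k => Real.sinh k / k) ((Real.cosh κ - c) / κ) (kappa c) := by
    have h := (Real.hasDerivAt_sinh κ).div (hasDerivAt_id κ) hκ.ne'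
    convert h using 1 <;> try rfl
    rw [id]
    field_simp
    nlinarith [kappa_sinh hc]
  have hne : (Real.cosh κ - c) / κ ≠ 0 := by
    have := cosh_kappa_gt hc
    exact ne_of_gt (div_pos (by linarith) hκ)
  have hev : ∀ᶠ c' in nhds c, Real.sinh (kappa c') / kappa c' = c' := by
    filter_upwards [Ioi_mem_nhds hc] with c' hc'
    exact g_kappa hc'
  exact HasDerivAt.of_local_left_inverse (kappa_continuousAt hc) hg hne hev


lemma hasDerivAt_logcosh (y : ℝ) :
    HasDerivAt (fun z => Real.log (Real.cosh z)) (Real.tanh y) y := by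
  have h := (Real.hasDerivAt_log (Real.cosh_pos y).ne').comp y (Real.hasDerivAt_cosh y)
  have : Real.tanh y = (Real.cosh y)⁻¹ * Real.sinh y := by
    rw [Real.tanh_eq_sinh_div_cosh]; ring
  rw [this]
  exact h

lemma hasDerivAt_tanh (y : ℝ) : HasDerivAt Real.tanh ((Real.cosh y ^ 2)⁻¹) y := by
  have h := (Real.hasDerivAt_sinh y).div (Real.hasDerivAt_cosh y) (Real.cosh_pos y).ne'
  have he : Real.tanh = fun y => Real.sinh y / Real.cosh y :=
    funext fun y => Real.tanh_eq_sinh_div_cosh y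
  rw [he]
  convert h using 1 <;> try rfl
  have h2 := Real.cosh_sq_sub_sinh_sq y
  rw [show Real.cosh y * Real.cosh y - Real.sinh y * Real.sinh y = 1 by nlinarith]
  rw [one_div]

lemma qt_eq (c x : ℝ) : qt c x =
    Real.log (Real.cosh (kappa c * (x - 1))) - Real.log (Real.cosh (kappa c * x)) :=
  Real.log_div (Real.cosh_pos _).ne' (Real.cosh_pos _).ne'

lemma hasDerivAt_qt (c x : ℝ) : HasDerivAt (qt c)
    (kappa c * Real.tanh (kappa c * (x - 1)) - kappa c * Real.tanh (kappa c * x)) x := by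
  set k := kappa c
  have hqt : qt c = fun y => Real.log (Real.cosh (k * (y - 1))) - Real.log (Real.cosh (k * y)) :=
    funext fun y => qt_eq c y
  rw [hqt]
  have h1 : HasDerivAt (fun y : ℝ => k * (y - 1)) k x := by
    simpa using ((hasDerivAt_id x).sub_const 1).const_mul k
  have h2 : HasDerivAt (fun y : ℝ => k * y) k x := by
    simpa using (hasDerivAt_id x).const_mul k
  have h3 := (hasDerivAt_logcosh (k * (x - 1))).comp x h1
  have h4 := (hasDerivAt_logcosh (k * x)).comp x h2
  convert h3.sub h4 using 1 <;> try rfl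
  ring

lemma ptil_eq (c x : ℝ) : ptil c x =
    c * kappa c * (Real.tanh (kappa c * x) - Real.tanh (kappa c * (x - 1))) := by
  show -c * deriv (qt c) x = _
  rw [(hasDerivAt_qt c x).deriv]
  ring

lemma rtil_eq (c x : ℝ) : rtil c x =
    2 * Real.log (Real.cosh (kappa c * x)) - Real.log (Real.cosh (kappa c * (x + 1)))
      - Real.log (Real.cosh (kappa c * (x - 1))) := by
  show qt c (x + 1) - qt c x = _
  rw [qt_eq, qt_eq, show x + (1:ℝ) - 1 = x by ring]
  ring

-- basic exponential bounds
lemma exp_abs_le_two_cosh (y : ℝ) : Real.exp |y| ≤ 2 * Real.cosh y := by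
  rw [Real.cosh_eq]
  rcases abs_cases y with ⟨h, _⟩ | ⟨h, _⟩ <;> rw [h] <;>
    [linarith [Real.exp_pos (-y)]; linarith [Real.exp_pos y]]

lemma inv_cosh_le (y : ℝ) : (Real.cosh y)⁻¹ ≤ 2 * Real.exp (-|y|) := by
  have h1 := exp_abs_le_two_cosh y
  have h2 : (0:ℝ) < Real.exp |y| := Real.exp_pos _
  have h3 : (0:ℝ) < Real.cosh y := Real.cosh_pos y
  calc (Real.cosh y)⁻¹ ≤ (Real.exp |y| / 2)⁻¹ := by
        apply inv_anti₀ (by positivity) (by linarith)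
    _ = 2 * Real.exp (-|y|) := by
        rw [Real.exp_neg, inv_div, div_eq_mul_inv]

lemma tanh_sub_eq (A B : ℝ) : Real.tanh A - Real.tanh B =
    Real.sinh (A - B) / (Real.cosh A * Real.cosh B) := by
  rw [Real.tanh_eq_sinh_div_cosh, Real.tanh_eq_sinh_div_cosh, Real.sinh_sub]
  have hA := (Real.cosh_pos A).ne'
  have hB := (Real.cosh_pos B).ne'
  field_simp

lemma tanh_diff_bound (A B : ℝ) : |Real.tanh A - Real.tanh B| ≤
    4 * Real.sinh |A - B| * Real.exp (-(|A| + |B|)) := by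
  rw [tanh_sub_eq, abs_div, abs_mul, abs_of_pos (Real.cosh_pos A), abs_of_pos (Real.cosh_pos B)]
  have hA := inv_cosh_le A
  have hB := inv_cosh_le B
  have h1 : |Real.sinh (A - B)| / (Real.cosh A * Real.cosh B)
      = |Real.sinh (A - B)| * (Real.cosh A)⁻¹ * (Real.cosh B)⁻¹ := by
    rw [div_eq_mul_inv, mul_inv]; ring
  rw [h1, Real.abs_sinh]
  have h2 : (0:ℝ) ≤ Real.sinh |A - B| := Real.sinh_nonneg_iff.mpr (abs_nonneg _)
  calc Real.sinh |A - B| * (Real.cosh A)⁻¹ * (Real.cosh B)⁻¹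
      ≤ Real.sinh |A - B| * (2 * Real.exp (-|A|)) * (2 * Real.exp (-|B|)) := by
        have c1 : (0:ℝ) ≤ (Real.cosh A)⁻¹ := by positivity
        have c2 : (0:ℝ) ≤ (Real.cosh B)⁻¹ := by positivity
        have c3 : (0:ℝ) ≤ 2 * Real.exp (-|A|) := by positivity
        apply mul_le_mul (mul_le_mul le_rfl hA c1 h2) hB c2
        positivity
    _ = 4 * Real.sinh |A - B| * (Real.exp (-|A|) * Real.exp (-|B|)) := by ring
    _ = 4 * Real.sinh |A - B| * Real.exp (-(|A| + |B|)) := by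
        rw [← Real.exp_add]; ring_nf

lemma tanh_pair_bound {k : ℝ} (hk : 0 ≤ k) (x s r : ℝ) (hs : |s| ≤ 2) (hr : |r| ≤ 2) :
    |Real.tanh (k * (x + s)) - Real.tanh (k * (x + r))| ≤
      4 * Real.sinh (4 * k) * Real.exp (4 * k) * Real.exp (-(2 * k * |x|)) := by
  have h := tanh_diff_bound (k * (x + s)) (k * (x + r))
  have hAB : |k * (x + s) - k * (x + r)| = k * |s - r| := by
    rw [show k * (x + s) - k * (x + r) = k * (s - r) by ring, abs_mul, abs_of_nonneg hk]
  have hsinh : Real.sinh |k * (x + s) - k * (x + r)| ≤ Real.sinh (4 * k) := by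
    rw [hAB]
    apply Real.sinh_le_sinh.mpr
    have : |s - r| ≤ 4 := by
      calc |s - r| ≤ |s| + |r| := abs_sub _ _
      _ ≤ 4 := by linarith
    nlinarith
  have hexp : Real.exp (-(|k * (x + s)| + |k * (x + r)|)) ≤
      Real.exp (4 * k) * Real.exp (-(2 * k * |x|)) := by
    rw [← Real.exp_add]
    apply Real.exp_le_exp.mpr
    have e1 : |k * (x + s)| = k * |x + s| := by rw [abs_mul, abs_of_nonneg hk]
    have e2 : |k * (x + r)| = k * |x + r| := by rw [abs_mul, abs_of_nonneg hk]
    have e3 : |x| - |s| ≤ |x + s| := by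
      have := abs_sub_abs_le_abs_sub x (-s)
      simp only [sub_neg_eq_add, abs_neg] at this
      linarith
    have e4 : |x| - |r| ≤ |x + r| := by
      have := abs_sub_abs_le_abs_sub x (-r)
      simp only [sub_neg_eq_add, abs_neg] at this
      linarith
    rw [e1, e2]
    nlinarith [mul_le_mul_of_nonneg_left e3 hk, mul_le_mul_of_nonneg_left e4 hk,
      mul_le_mul_of_nonneg_left hs hk, mul_le_mul_of_nonneg_left hr hk]
  have hs0 : (0:ℝ) ≤ Real.sinh |k * (x + s) - k * (x + r)| :=
    Real.sinh_nonneg_iff.mpr (abs_nonneg _)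
  have hs4 : (0:ℝ) ≤ Real.sinh (4 * k) := Real.sinh_nonneg_iff.mpr (by linarith)
  calc |Real.tanh (k * (x + s)) - Real.tanh (k * (x + r))|
      ≤ 4 * Real.sinh |k * (x + s) - k * (x + r)|
          * Real.exp (-(|k * (x + s)| + |k * (x + r)|)) := h
    _ ≤ 4 * Real.sinh (4 * k) * (Real.exp (4 * k) * Real.exp (-(2 * k * |x|))) := by
        apply mul_le_mul (by nlinarith) hexp (by positivity) (by positivity)
    _ = 4 * Real.sinh (4 * k) * Real.exp (4 * k) * Real.exp (-(2 * k * |x|)) := by ring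

lemma sech_sq_bound {k : ℝ} (hk : 0 ≤ k) (x s : ℝ) (hs : |s| ≤ 2) :
    (Real.cosh (k * (x + s)) ^ 2)⁻¹ ≤ 4 * Real.exp (4 * k) * Real.exp (-(2 * k * |x|)) := by
  have h1 := inv_cosh_le (k * (x + s))
  have h2 : (Real.cosh (k * (x + s)) ^ 2)⁻¹ = ((Real.cosh (k * (x + s)))⁻¹) ^ 2 := by
    rw [inv_pow]
  rw [h2]
  have h3 : ((Real.cosh (k * (x + s)))⁻¹) ^ 2 ≤ (2 * Real.exp (-|k * (x + s)|)) ^ 2 := by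
    apply pow_le_pow_left₀ (by positivity) h1
  calc ((Real.cosh (k * (x + s)))⁻¹) ^ 2 ≤ (2 * Real.exp (-|k * (x + s)|)) ^ 2 := h3
    _ = 4 * Real.exp (-(2 * |k * (x + s)|)) := by
        rw [mul_pow, ← Real.exp_nat_mul,
          show ((2:ℕ):ℝ) * (-|k * (x + s)|) = -(2 * |k * (x + s)|) by push_cast; ring]
        norm_num
    _ ≤ 4 * Real.exp (4 * k) * Real.exp (-(2 * k * |x|)) := by
        rw [mul_assoc, ← Real.exp_add]
        have e1 : |k * (x + s)| = k * |x + s| := by rw [abs_mul, abs_of_nonneg hk]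
        have e3 : |x| - |s| ≤ |x + s| := by
          have := abs_sub_abs_le_abs_sub x (-s)
          simp only [sub_neg_eq_add, abs_neg] at this
          linarith
        have : -(2 * |k * (x + s)|) ≤ 4 * k + -(2 * k * |x|) := by
          rw [e1]
          nlinarith [mul_le_mul_of_nonneg_left e3 hk, mul_le_mul_of_nonneg_left hs hk]
        have := Real.exp_le_exp.mpr this
        linarith


lemma rtil_bound {c : ℝ} (hc : 1 < c) (x : ℝ) :
    |rtil c x| ≤ 2 * (Real.cosh (2 * kappa c) - 1) * Real.exp (-(2 * kappa c * |x|)) := by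
  set k := kappa c with hkdef
  have hk : 0 < k := kappa_pos hc
  have p1 : (0:ℝ) < Real.cosh (k * x) := Real.cosh_pos _
  have p2 : (0:ℝ) < Real.cosh (k * (x+1)) := Real.cosh_pos _
  have p3 : (0:ℝ) < Real.cosh (k * (x-1)) := Real.cosh_pos _
  have pyth1 := Real.cosh_sq_sub_sinh_sq (k * x)
  have pyth2 := Real.cosh_sq_sub_sinh_sq k
  have hid1 : Real.cosh (k*(x+1)) * Real.cosh (k*(x-1))
      = (Real.cosh (2*(k*x)) + Real.cosh (2*k)) / 2 := by
    rw [show k*(x+1) = k*x + k by ring, show k*(x-1) = k*x - k by ring,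
      Real.cosh_add, Real.cosh_sub, Real.cosh_two_mul, Real.cosh_two_mul]
    nlinarith
  have hid2 : Real.cosh (k*x) ^ 2 = (Real.cosh (2*(k*x)) + 1) / 2 := by
    rw [Real.cosh_two_mul]; nlinarith
  set N : ℝ := Real.cosh (2*(k*x)) + 1 with hNdef
  set D : ℝ := Real.cosh (2*(k*x)) + Real.cosh (2*k) with hDdef
  have hN : 0 < N := by positivity
  have hD : 0 < D := by positivity
  have hND : N ≤ D := by
    have : (1:ℝ) ≤ Real.cosh (2*k) := Real.one_le_cosh _
    simp only [hNdef, hDdef]; linarith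
  have e0 : Real.log (Real.cosh (k*x) ^ 2) = 2 * Real.log (Real.cosh (k*x)) := by
    rw [Real.log_pow]; push_cast; ring
  have e1 : Real.log (Real.cosh (k*(x+1))) + Real.log (Real.cosh (k*(x-1)))
      = Real.log (D / 2) := by
    rw [← Real.log_mul p2.ne' p3.ne', hid1]
  have hr : rtil c x = Real.log (N / 2) - Real.log (D / 2) := by
    rw [rtil_eq]
    rw [← hkdef] at *
    have := e0
    rw [hid2] at this
    linarith
  have hr2 : rtil c x = Real.log N - Real.log D := by
    rw [hr, Real.log_div hN.ne' (by norm_num), Real.log_div hD.ne' (by norm_num)]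
    ring
  have hle : rtil c x ≤ 0 := by
    rw [hr2]
    have := Real.log_le_log hN hND
    linarith
  rw [abs_of_nonpos hle, hr2]
  have h3 : Real.log D - Real.log N = Real.log (D / N) := (Real.log_div hD.ne' hN.ne').symm
  have h4 : Real.log (D / N) ≤ D / N - 1 := Real.log_le_sub_one_of_pos (by positivity)
  have h5 : D / N - 1 = (Real.cosh (2*k) - 1) / N := by
    field_simp
    simp only [hNdef, hDdef]
    ring
  have h6 : (Real.cosh (2*k) - 1) / N ≤ (Real.cosh (2*k) - 1) * (2 * Real.exp (-(2*k*|x|))) := by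
    have hc2 : (0:ℝ) ≤ Real.cosh (2*k) - 1 := by linarith [Real.one_le_cosh (2*k)]
    have hinv : N⁻¹ ≤ 2 * Real.exp (-(2*k*|x|)) := by
      have i1 : N⁻¹ ≤ (Real.cosh (2*(k*x)))⁻¹ := by
        apply inv_anti₀ (Real.cosh_pos _)
        simp only [hNdef]; linarith
      have i2 := inv_cosh_le (2*(k*x))
      have i3 : |2*(k*x)| = 2*k*|x| := by
        rw [abs_mul, abs_mul, abs_of_nonneg (by norm_num : (0:ℝ) ≤ 2), abs_of_nonneg hk.le]
        ring
      rw [i3] at i2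
      linarith
    rw [div_eq_mul_inv]
    exact mul_le_mul_of_nonneg_left hinv hc2
  linarith

lemma ptil_bound {c : ℝ} (hc : 1 < c) (x : ℝ) :
    |ptil c x| ≤ c * kappa c * (4 * Real.sinh (4 * kappa c) * Real.exp (4 * kappa c))
      * Real.exp (-(2 * kappa c * |x|)) := by
  set k := kappa c with hkdef
  have hk : 0 < k := kappa_pos hc
  rw [ptil_eq, show k * x = k * (x + 0) by ring, show k * (x - 1) = k * (x + (-1)) by ring]
  rw [abs_mul, abs_of_pos (by positivity : (0:ℝ) < c * k)]
  have h := tanh_pair_bound hk.le x 0 (-1) (by norm_num) (by norm_num)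
  have hck : (0:ℝ) < c * k := by positivity
  calc c * k * |Real.tanh (k*(x+0)) - Real.tanh (k*(x+(-1)))|
      ≤ c * k * (4 * Real.sinh (4*k) * Real.exp (4*k) * Real.exp (-(2*k*|x|))) :=
        mul_le_mul_of_nonneg_left h hck.le
    _ = c * k * (4 * Real.sinh (4*k) * Real.exp (4*k)) * Real.exp (-(2*k*|x|)) := by ring

lemma hasDerivAt_rtil (c x : ℝ) : HasDerivAt (rtil c)
    (kappa c * ((Real.tanh (kappa c*(x+0)) - Real.tanh (kappa c*(x+1)))
      + (Real.tanh (kappa c*(x+0)) - Real.tanh (kappa c*(x+(-1)))))) x := by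
  set k := kappa c with hkdef
  have h1 := (hasDerivAt_qt c (x+1)).comp x ((hasDerivAt_id x).add_const 1)
  have h2 := hasDerivAt_qt c x
  have h : HasDerivAt (rtil c)
      ((k * Real.tanh (k * (x + 1 - 1)) - k * Real.tanh (k * (x+1))) * 1
        - (k * Real.tanh (k * (x - 1)) - k * Real.tanh (k * x))) x := h1.sub h2
  convert h using 1 <;> try rfl
  rw [show k*(x+0) = k*x by ring, show k*(x+(-1)) = k*(x-1) by ring,
    show k*(x+1-1) = k*x by ring]
  ring

lemma hasDerivAt_ptil (c x : ℝ) : HasDerivAt (ptil c)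
    (c * kappa c * (kappa c * (Real.cosh (kappa c*(x+0)) ^ 2)⁻¹
      - kappa c * (Real.cosh (kappa c*(x+(-1))) ^ 2)⁻¹)) x := by
  set k := kappa c with hkdef
  have hp : ptil c = fun y => c * k * (Real.tanh (k*y) - Real.tanh (k*(y-1))) :=
    funext fun y => ptil_eq c y
  rw [hp]
  have hi1 : HasDerivAt (fun y : ℝ => k * y) k x := by
    simpa using (hasDerivAt_id x).const_mul k
  have hi2 : HasDerivAt (fun y : ℝ => k * (y - 1)) k x := by
    simpa using ((hasDerivAt_id x).sub_const 1).const_mul k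
  have h1 := (hasDerivAt_tanh (k*x)).comp x hi1
  have h2 := (hasDerivAt_tanh (k*(x-1))).comp x hi2
  have h := (h1.sub h2).const_mul (c * k)
  convert h using 1 <;> try rfl
  rw [show k*(x+0) = k*x by ring, show k*(x+(-1)) = k*(x-1) by ring]
  ring

lemma hasDerivAt_solProfile (c x : ℝ) : HasDerivAt (solProfile c)
    (kappa c * ((Real.tanh (kappa c*(x+0)) - Real.tanh (kappa c*(x+1)))
      + (Real.tanh (kappa c*(x+0)) - Real.tanh (kappa c*(x+(-1))))),
     c * kappa c * (kappa c * (Real.cosh (kappa c*(x+0)) ^ 2)⁻¹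
      - kappa c * (Real.cosh (kappa c*(x+(-1))) ^ 2)⁻¹)) x :=
  (hasDerivAt_rtil c x).prodMk (hasDerivAt_ptil c x)

lemma deriv_solProfile_bound {c : ℝ} (hc : 1 < c) (x : ℝ) :
    |(deriv (solProfile c) x).1| + |(deriv (solProfile c) x).2| ≤
      (2 * kappa c * (4 * Real.sinh (4*kappa c) * Real.exp (4*kappa c))
        + 2 * c * kappa c ^ 2 * (4 * Real.exp (4*kappa c))) * Real.exp (-(2*kappa c*|x|)) := by
  set k := kappa c with hkdef
  have hk : 0 < k := kappa_pos hc
  rw [(hasDerivAt_solProfile c x).deriv]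
  dsimp only
  have t1 := tanh_pair_bound hk.le x 0 1 (by norm_num) (by norm_num)
  have t2 := tanh_pair_bound hk.le x 0 (-1) (by norm_num) (by norm_num)
  have s1 := sech_sq_bound hk.le x 0 (by norm_num)
  have s2 := sech_sq_bound hk.le x (-1) (by norm_num)
  have i1 : (0:ℝ) ≤ (Real.cosh (k*(x+0)) ^ 2)⁻¹ := by positivity
  have i2 : (0:ℝ) ≤ (Real.cosh (k*(x+(-1))) ^ 2)⁻¹ := by positivity
  have hfst : |k * ((Real.tanh (k*(x+0)) - Real.tanh (k*(x+1)))
      + (Real.tanh (k*(x+0)) - Real.tanh (k*(x+(-1)))))| ≤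
      2 * k * (4 * Real.sinh (4*k) * Real.exp (4*k)) * Real.exp (-(2*k*|x|)) := by
    rw [abs_mul, abs_of_pos hk]
    calc k * |(Real.tanh (k*(x+0)) - Real.tanh (k*(x+1)))
        + (Real.tanh (k*(x+0)) - Real.tanh (k*(x+(-1))))|
        ≤ k * (|Real.tanh (k*(x+0)) - Real.tanh (k*(x+1))|
          + |Real.tanh (k*(x+0)) - Real.tanh (k*(x+(-1)))|) :=
          mul_le_mul_of_nonneg_left (abs_add_le _ _) hk.le
      _ ≤ k * (4 * Real.sinh (4*k) * Real.exp (4*k) * Real.exp (-(2*k*|x|))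
          + 4 * Real.sinh (4*k) * Real.exp (4*k) * Real.exp (-(2*k*|x|))) :=
          mul_le_mul_of_nonneg_left (add_le_add t1 t2) hk.le
      _ = 2 * k * (4 * Real.sinh (4*k) * Real.exp (4*k)) * Real.exp (-(2*k*|x|)) := by ring
  have hsnd : |c * k * (k * (Real.cosh (k*(x+0)) ^ 2)⁻¹ - k * (Real.cosh (k*(x+(-1))) ^ 2)⁻¹)|
      ≤ 2 * c * k^2 * (4 * Real.exp (4*k)) * Real.exp (-(2*k*|x|)) := by
    rw [abs_mul, abs_of_pos (by positivity : (0:ℝ) < c * k)]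
    calc c * k * |k * (Real.cosh (k*(x+0)) ^ 2)⁻¹ - k * (Real.cosh (k*(x+(-1))) ^ 2)⁻¹|
        ≤ c * k * (|k * (Real.cosh (k*(x+0)) ^ 2)⁻¹| + |k * (Real.cosh (k*(x+(-1))) ^ 2)⁻¹|) :=
          mul_le_mul_of_nonneg_left (abs_sub _ _) (by positivity)
      _ = c * k * (k * (Real.cosh (k*(x+0)) ^ 2)⁻¹ + k * (Real.cosh (k*(x+(-1))) ^ 2)⁻¹) := by
          rw [abs_mul, abs_mul, abs_of_pos hk, abs_of_nonneg i1, abs_of_nonneg i2]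
      _ ≤ c * k * (k * (4 * Real.exp (4*k) * Real.exp (-(2*k*|x|)))
          + k * (4 * Real.exp (4*k) * Real.exp (-(2*k*|x|)))) :=
          mul_le_mul_of_nonneg_left (add_le_add (mul_le_mul_of_nonneg_left s1 hk.le)
            (mul_le_mul_of_nonneg_left s2 hk.le)) (by positivity)
      _ = 2 * c * k^2 * (4 * Real.exp (4*k)) * Real.exp (-(2*k*|x|)) := by ring
  calc _ ≤ 2 * k * (4 * Real.sinh (4*k) * Real.exp (4*k)) * Real.exp (-(2*k*|x|))
        + 2 * c * k^2 * (4 * Real.exp (4*k)) * Real.exp (-(2*k*|x|)) := add_le_add hfst hsnd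
    _ = (2 * k * (4 * Real.sinh (4*k) * Real.exp (4*k))
        + 2 * c * k ^ 2 * (4 * Real.exp (4*k))) * Real.exp (-(2*k*|x|)) := by ring


lemma summable_exp_abs {ε : ℝ} (hε : 0 < ε) :
    Summable (fun n : ℤ => Real.exp (-(ε * |(n : ℝ)|))) := by
  apply Summable.of_nat_of_neg
  · have h : ∀ n : ℕ, Real.exp (-(ε * |((n : ℤ) : ℝ)|)) = Real.exp (-ε) ^ n := by
      intro n
      rw [← Real.exp_nat_mul]
      congr 1
      push_cast
      rw [abs_of_nonneg (by positivity : (0:ℝ) ≤ (n:ℝ))]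
      ring
    exact (summable_geometric_of_lt_one (Real.exp_nonneg _)
      (Real.exp_lt_one_iff.mpr (by linarith))).congr (fun n => (h n).symm)
  · have h : ∀ n : ℕ, Real.exp (-(ε * |((↑(-(n:ℤ)) : ℝ))|)) = Real.exp (-ε) ^ n := by
      intro n
      rw [← Real.exp_nat_mul]
      congr 1
      push_cast
      rw [abs_neg, abs_of_nonneg (by positivity : (0:ℝ) ≤ (n:ℝ))]
      ring
    exact (summable_geometric_of_lt_one (Real.exp_nonneg _)
      (Real.exp_lt_one_iff.mpr (by linarith))).congr (fun n => (h n).symm)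

lemma summable_of_decay {f : ℤ → ℝ} (hf0 : ∀ n, 0 ≤ f n) {C ε : ℝ} (hε : 0 < ε)
    (h : ∀ n : ℤ, f n ≤ C * Real.exp (-(ε * |(n : ℝ)|))) : Summable f :=
  Summable.of_nonneg_of_le hf0 h ((summable_exp_abs hε).mul_left C)

lemma meml2w_of_pointwise {u : ℤ → ℝ × ℝ} {b D t : ℝ} (hb : 0 < b)
    (hD : ∀ n : ℤ, |(u n).1| + |(u n).2| ≤ D * Real.exp (-(b * |(n : ℝ) - t|)))
    {a : ℝ} (ha : |a| < b) : Meml2w a u := by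
  apply summable_of_decay (fun n => mul_nonneg (Real.exp_pos _).le
    (by simp only [nsq]; positivity)) (C := D ^ 2 * Real.exp (2 * b * |t|))
    (ε := 2 * (b - |a|)) (by linarith)
  intro n
  have hDn := hD n
  have h1 : nsq (u n) ≤ (D * Real.exp (-(b * |(n : ℝ) - t|))) ^ 2 := by
    have e1 := sq_abs (u n).1
    have e2 := sq_abs (u n).2
    simp only [nsq]
    nlinarith [abs_nonneg (u n).1, abs_nonneg (u n).2,
      mul_nonneg (abs_nonneg (u n).1) (abs_nonneg (u n).2)]
  have hexp : 2 * a * (n:ℝ) + (-(b * |(n:ℝ) - t|) + -(b * |(n:ℝ) - t|)) ≤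
      2 * b * |t| + -(2 * (b - |a|) * |(n:ℝ)|) := by
    have e1 : a * (n:ℝ) ≤ |a| * |(n:ℝ)| := by
      calc a * (n:ℝ) ≤ |a * (n:ℝ)| := le_abs_self _
        _ = |a| * |(n:ℝ)| := abs_mul _ _
    have e2 : |(n:ℝ)| - |t| ≤ |(n:ℝ) - t| := abs_sub_abs_le_abs_sub _ _
    nlinarith [mul_le_mul_of_nonneg_left e2 hb.le]
  calc Real.exp (2 * a * n) * nsq (u n)
      ≤ Real.exp (2 * a * n) * (D * Real.exp (-(b * |(n : ℝ) - t|))) ^ 2 :=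
        mul_le_mul_of_nonneg_left h1 (Real.exp_pos _).le
    _ = D ^ 2 * (Real.exp (2 * a * (n:ℝ)) * Real.exp (-(b * |(n:ℝ) - t|) + -(b * |(n:ℝ) - t|))) := by
        rw [mul_pow, sq (Real.exp _), ← Real.exp_add]
        push_cast
        ring
    _ = D ^ 2 * Real.exp (2 * a * (n:ℝ) + (-(b * |(n:ℝ) - t|) + -(b * |(n:ℝ) - t|))) := by
        rw [← Real.exp_add]
    _ ≤ D ^ 2 * Real.exp (2 * b * |t| + -(2 * (b - |a|) * |(n:ℝ)|)) :=
        mul_le_mul_of_nonneg_left (Real.exp_le_exp.mpr hexp) (sq_nonneg D)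
    _ = D ^ 2 * Real.exp (2 * b * |t|) * Real.exp (-(2 * (b - |a|) * |(n:ℝ)|)) := by
        rw [Real.exp_add]; ring

lemma meml2w_neg_of_halfline {u : ℤ → ℝ × ℝ} {b E t : ℝ} (hb : 0 < b)
    (hE : ∀ n : ℤ, |(u n).1| + |(u n).2| ≤ E * Real.exp (b * min ((n : ℝ) - t) 0))
    {a : ℝ} (ha0 : 0 < a) (hab : a < b) : Meml2w (-a) u := by
  have hmin : 0 < min a (b - a) := lt_min ha0 (by linarith)
  apply summable_of_decay (fun n => mul_nonneg (Real.exp_pos _).le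
    (by simp only [nsq]; positivity)) (C := E ^ 2 * Real.exp (2 * b * |t|))
    (ε := 2 * min a (b - a)) (by linarith)
  intro n
  have hEn := hE n
  have h1 : nsq (u n) ≤ (E * Real.exp (b * min ((n : ℝ) - t) 0)) ^ 2 := by
    have e1 := sq_abs (u n).1
    have e2 := sq_abs (u n).2
    simp only [nsq]
    nlinarith [abs_nonneg (u n).1, abs_nonneg (u n).2,
      mul_nonneg (abs_nonneg (u n).1) (abs_nonneg (u n).2)]
  have hm : min ((n:ℝ) - t) 0 ≤ min (n:ℝ) 0 + |t| := by
    rcases le_total ((n:ℝ)) 0 with h | h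
    · rw [min_eq_left h]
      calc min ((n:ℝ) - t) 0 ≤ (n:ℝ) - t := min_le_left _ _
        _ ≤ (n:ℝ) + |t| := by linarith [neg_abs_le t]
    · rw [min_eq_right h]
      calc min ((n:ℝ) - t) 0 ≤ 0 := min_le_right _ _
        _ ≤ 0 + |t| := by simp [abs_nonneg]
  have hm2 : -a * (n:ℝ) + b * min (n:ℝ) 0 ≤ -(min a (b - a) * |(n:ℝ)|) := by
    rcases le_total ((n:ℝ)) 0 with h | h
    · rw [min_eq_left h, abs_of_nonpos h]
      nlinarith [min_le_right a (b - a)]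
    · rw [min_eq_right h, abs_of_nonneg h]
      nlinarith [min_le_left a (b - a)]
  have hexp : 2 * -a * (n:ℝ) + (b * min ((n:ℝ) - t) 0 + b * min ((n:ℝ) - t) 0) ≤
      2 * b * |t| + -(2 * min a (b - a) * |(n:ℝ)|) := by
    nlinarith [mul_le_mul_of_nonneg_left hm hb.le]
  calc Real.exp (2 * -a * n) * nsq (u n)
      ≤ Real.exp (2 * -a * n) * (E * Real.exp (b * min ((n : ℝ) - t) 0)) ^ 2 :=
        mul_le_mul_of_nonneg_left h1 (Real.exp_pos _).le
    _ = E ^ 2 * (Real.exp (2 * -a * (n:ℝ))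
          * Real.exp (b * min ((n:ℝ) - t) 0 + b * min ((n:ℝ) - t) 0)) := by
        rw [mul_pow, sq (Real.exp _), ← Real.exp_add]
        push_cast
        ring
    _ = E ^ 2 * Real.exp (2 * -a * (n:ℝ)
          + (b * min ((n:ℝ) - t) 0 + b * min ((n:ℝ) - t) 0)) := by
        rw [← Real.exp_add]
    _ ≤ E ^ 2 * Real.exp (2 * b * |t| + -(2 * min a (b - a) * |(n:ℝ)|)) :=
        mul_le_mul_of_nonneg_left (Real.exp_le_exp.mpr hexp) (sq_nonneg E)
    _ = E ^ 2 * Real.exp (2 * b * |t|) * Real.exp (-(2 * min a (b - a) * |(n:ℝ)|)) := by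
        rw [Real.exp_add]; ring

lemma summable_exp_shift (b s : ℝ) (hb : 0 < b) :
    Summable (fun j : ℤ => Real.exp (-(b * |s - (j : ℝ)|))) := by
  apply Summable.of_nonneg_of_le (fun j => (Real.exp_pos _).le) (fun j => ?_)
    ((summable_exp_abs hb).mul_left (Real.exp (b * |s|)))
  rw [← Real.exp_add]
  apply Real.exp_le_exp.mpr
  have h := abs_sub_abs_le_abs_sub ((j:ℝ)) s
  rw [abs_sub_comm ((j:ℝ)) s] at h
  nlinarith [mul_le_mul_of_nonneg_left h hb.le]

lemma summable_exp_shift_nat (b s : ℝ) (hb : 0 < b) :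
    Summable (fun k : ℕ => Real.exp (-(b * |s - (k : ℝ)|))) := by
  have h := (summable_exp_shift b s hb).comp_injective Nat.cast_injective
  apply h.congr
  intro k
  simp only [Function.comp_apply]
  norm_num

lemma tsum_exp_shift_le (b s : ℝ) (hb : 0 < b) :
    ∑' k : ℕ, Real.exp (-(b * |s - (k : ℝ)|)) ≤
      Real.exp b * ∑' j : ℤ, Real.exp (-(b * |(j : ℝ)|)) := by
  have hZ := summable_exp_shift b s hb
  have hNat := summable_exp_shift_nat b s hb
  have h1 : ∑' k : ℕ, Real.exp (-(b * |s - (k : ℝ)|)) ≤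
      ∑' j : ℤ, Real.exp (-(b * |s - (j : ℝ)|)) := by
    apply Summable.tsum_le_tsum_of_inj (fun k : ℕ => (k : ℤ))
      Nat.cast_injective
      (fun c _ => (Real.exp_pos _).le) (fun k => le_of_eq (by norm_num)) hNat hZ
  have h2 : ∑' j : ℤ, Real.exp (-(b * |s - (j : ℝ)|)) ≤
      Real.exp b * ∑' j : ℤ, Real.exp (-(b * |(j : ℝ)|)) := by
    set m : ℤ := ⌊s⌋ with hmdef
    have hre : ∑' j : ℤ, Real.exp (-(b * |s - (j : ℝ)|)) =
        ∑' i : ℤ, Real.exp (-(b * |s - ((m + i : ℤ) : ℝ)|)) :=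
      ((Equiv.addLeft m).tsum_eq (fun j : ℤ => Real.exp (-(b * |s - (j : ℝ)|)))).symm
    rw [hre, ← tsum_mul_left]
    have hsumL : Summable (fun i : ℤ => Real.exp (-(b * |s - ((m + i : ℤ) : ℝ)|))) := by
      have h6 := hZ.comp_injective (add_right_injective m)
      exact h6
    refine Summable.tsum_le_tsum (fun i => ?_) hsumL ((summable_exp_abs hb).mul_left _)
    · 
      rw [← Real.exp_add]
      apply Real.exp_le_exp.mpr
      have hfl1 : ((m:ℝ)) ≤ s := Int.floor_le s
      have hfl2 : s < (m:ℝ) + 1 := Int.lt_floor_add_one s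
      have habs : |(i:ℝ)| - 1 ≤ |s - ((m + i : ℤ) : ℝ)| := by
        have h3 : |(i:ℝ)| - |s - (m:ℝ)| ≤ |(i:ℝ) - (s - (m:ℝ))| := abs_sub_abs_le_abs_sub _ _
        have h4 : |s - (m:ℝ)| ≤ 1 := by rw [abs_of_nonneg (by linarith)]; linarith
        have h5 : |(i:ℝ) - (s - (m:ℝ))| = |s - ((m + i : ℤ) : ℝ)| := by
          rw [abs_sub_comm]
          push_cast
          ring_nf
        linarith [h5 ▸ h3]
      nlinarith [mul_le_mul_of_nonneg_left habs hb.le]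
  linarith


lemma ucDc_eq_and_bound {c : ℝ} (hc : 1 < c) (γ : ℝ) (n : ℤ) :
    |(ucDc c γ n).1| + |(ucDc c γ n).2| ≤
      ((2 * |((Real.cosh (kappa c) - c) / kappa c)⁻¹|
          + 2 * kappa c * |γ| + (kappa c + c * |((Real.cosh (kappa c) - c) / kappa c)⁻¹|))
          * (4 * Real.sinh (4 * kappa c) * Real.exp (4 * kappa c))
        + c * kappa c * (4 * Real.exp (4 * kappa c))
          * (3 * |((Real.cosh (kappa c) - c) / kappa c)⁻¹| + 2 * kappa c * |γ|))
        * (1 + |(n : ℝ) - c * γ|) * Real.exp (-(2 * kappa c * |(n : ℝ) - c * γ|)) := by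
  set k := kappa c with hkdef
  have hk : 0 < k := kappa_pos hc
  set kd : ℝ := ((Real.cosh k - c) / k)⁻¹ with hkddef
  have hK : HasDerivAt kappa kd c := hasDerivAt_kappa hc
  set x : ℝ := (n : ℝ) - c * γ with hxdef
  have hX : HasDerivAt (fun c' : ℝ => (n : ℝ) - c' * γ) (-γ) c := by
    simpa using ((hasDerivAt_id c).mul_const γ).const_sub ((n : ℝ))
  have hArg : ∀ s : ℝ, HasDerivAt (fun c' : ℝ => kappa c' * (((n : ℝ) - c' * γ) + s))
      (kd * (x + s) + k * (-γ)) c := fun s => hK.mul (hX.add_const s)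
  have hLog : ∀ s : ℝ, HasDerivAt
      (fun c' : ℝ => Real.log (Real.cosh (kappa c' * (((n : ℝ) - c' * γ) + s))))
      (Real.tanh (k * (x + s)) * (kd * (x + s) + k * (-γ))) c := fun s =>
    by have h := (hasDerivAt_logcosh (k * (x + s))).comp c (hArg s); exact h
  have hTanh : ∀ s : ℝ, HasDerivAt
      (fun c' : ℝ => Real.tanh (kappa c' * (((n : ℝ) - c' * γ) + s)))
      ((Real.cosh (k * (x + s)) ^ 2)⁻¹ * (kd * (x + s) + k * (-γ))) c := fun s =>
    by have h := (hasDerivAt_tanh (k * (x + s))).comp c (hArg s); exact h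
  -- r-component derivative
  have hr : HasDerivAt (fun c' : ℝ => rtil c' ((n : ℝ) - c' * γ))
      (kd * (x * (Real.tanh (k*(x+0)) - Real.tanh (k*(x+1)))
          + x * (Real.tanh (k*(x+0)) - Real.tanh (k*(x+(-1))))
          - (Real.tanh (k*(x+1)) - Real.tanh (k*(x+(-1)))))
        - k * γ * ((Real.tanh (k*(x+0)) - Real.tanh (k*(x+1)))
          + (Real.tanh (k*(x+0)) - Real.tanh (k*(x+(-1)))))) c := by
    have hfun : (fun c' : ℝ => rtil c' ((n : ℝ) - c' * γ)) = fun c' : ℝ =>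
        2 * Real.log (Real.cosh (kappa c' * (((n : ℝ) - c' * γ) + 0)))
          - Real.log (Real.cosh (kappa c' * (((n : ℝ) - c' * γ) + 1)))
          - Real.log (Real.cosh (kappa c' * (((n : ℝ) - c' * γ) + (-1)))) := by
      funext c'
      rw [rtil_eq]
      norm_num [sub_eq_add_neg]
    rw [hfun]
    have h := (((hLog 0).const_mul 2).sub (hLog 1)).sub (hLog (-1))
    convert h using 1 <;> try rfl
    ring
  -- p-component derivative
  have hp : HasDerivAt (fun c' : ℝ => ptil c' ((n : ℝ) - c' * γ))
      ((1 * k + c * kd) * (Real.tanh (k*(x+0)) - Real.tanh (k*(x+(-1))))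
        + c * k * ((Real.cosh (k*(x+0)) ^ 2)⁻¹ * (kd * (x+0) + k * (-γ))
          - (Real.cosh (k*(x+(-1))) ^ 2)⁻¹ * (kd * (x+(-1)) + k * (-γ)))) c := by
    have hfun : (fun c' : ℝ => ptil c' ((n : ℝ) - c' * γ)) = fun c' : ℝ =>
        c' * kappa c' * (Real.tanh (kappa c' * (((n : ℝ) - c' * γ) + 0))
          - Real.tanh (kappa c' * (((n : ℝ) - c' * γ) + (-1)))) := by
      funext c'
      rw [ptil_eq]
      norm_num [sub_eq_add_neg]
    rw [hfun]
    have h := ((hasDerivAt_id c).mul hK).mul ((hTanh 0).sub (hTanh (-1)))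
    convert h using 2 <;> try rfl
  have hsol : HasDerivAt (fun c' : ℝ => solProfile c' ((n : ℝ) - c' * γ)) (_, _) c :=
    hr.prodMk hp
  have hval : ucDc c γ n = (_, _) := hsol.deriv
  rw [hval]
  dsimp only
  -- bounds
  have t01 := tanh_pair_bound hk.le x 0 1 (by norm_num) (by norm_num)
  have t0m := tanh_pair_bound hk.le x 0 (-1) (by norm_num) (by norm_num)
  have t1m := tanh_pair_bound hk.le x 1 (-1) (by norm_num) (by norm_num)
  have s0 := sech_sq_bound hk.le x 0 (by norm_num)
  have sm := sech_sq_bound hk.le x (-1) (by norm_num)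
  set β : ℝ := 4 * Real.sinh (4 * k) * Real.exp (4 * k) with hβdef
  set β' : ℝ := 4 * Real.exp (4 * k) with hβ'def
  set E : ℝ := Real.exp (-(2 * k * |x|)) with hEdef
  have hE : 0 < E := Real.exp_pos _
  have hβ : 0 ≤ β := by
    have : (0:ℝ) ≤ Real.sinh (4 * k) := Real.sinh_nonneg_iff.mpr (by linarith)
    positivity
  have hβ' : 0 ≤ β' := by positivity
  have hc0 : (0:ℝ) < c := by linarith
  -- |Dr| bound
  have hDr : |kd * (x * (Real.tanh (k*(x+0)) - Real.tanh (k*(x+1)))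
          + x * (Real.tanh (k*(x+0)) - Real.tanh (k*(x+(-1))))
          - (Real.tanh (k*(x+1)) - Real.tanh (k*(x+(-1)))))
        - k * γ * ((Real.tanh (k*(x+0)) - Real.tanh (k*(x+1)))
          + (Real.tanh (k*(x+0)) - Real.tanh (k*(x+(-1)))))|
      ≤ |kd| * (|x| * (β * E) + |x| * (β * E) + β * E) + k * |γ| * (β * E + β * E) := by
    have i1 : |x * (Real.tanh (k*(x+0)) - Real.tanh (k*(x+1)))| ≤ |x| * (β * E) := by
      rw [abs_mul]
      exact mul_le_mul_of_nonneg_left (by rw [hβdef, hEdef]; exact t01) (abs_nonneg x)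
    have i2 : |x * (Real.tanh (k*(x+0)) - Real.tanh (k*(x+(-1))))| ≤ |x| * (β * E) := by
      rw [abs_mul]
      exact mul_le_mul_of_nonneg_left (by rw [hβdef, hEdef]; exact t0m) (abs_nonneg x)
    have i3 : |Real.tanh (k*(x+1)) - Real.tanh (k*(x+(-1)))| ≤ β * E := by
      rw [hβdef, hEdef]; exact t1m
    have inner1 : |x * (Real.tanh (k*(x+0)) - Real.tanh (k*(x+1)))
        + x * (Real.tanh (k*(x+0)) - Real.tanh (k*(x+(-1))))
        - (Real.tanh (k*(x+1)) - Real.tanh (k*(x+(-1))))|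
        ≤ |x| * (β * E) + |x| * (β * E) + β * E := by
      calc _ ≤ |x * (Real.tanh (k*(x+0)) - Real.tanh (k*(x+1)))
            + x * (Real.tanh (k*(x+0)) - Real.tanh (k*(x+(-1))))|
            + |Real.tanh (k*(x+1)) - Real.tanh (k*(x+(-1)))| := abs_sub _ _
        _ ≤ _ := by
            have := abs_add_le (x * (Real.tanh (k*(x+0)) - Real.tanh (k*(x+1))))
              (x * (Real.tanh (k*(x+0)) - Real.tanh (k*(x+(-1)))))
            linarith
    have inner2 : |(Real.tanh (k*(x+0)) - Real.tanh (k*(x+1)))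
        + (Real.tanh (k*(x+0)) - Real.tanh (k*(x+(-1))))| ≤ β * E + β * E := by
      refine (abs_add_le _ _).trans (add_le_add ?_ ?_) <;> rw [hβdef, hEdef]
      exacts [t01, t0m]
    calc _ ≤ |kd * (x * (Real.tanh (k*(x+0)) - Real.tanh (k*(x+1)))
          + x * (Real.tanh (k*(x+0)) - Real.tanh (k*(x+(-1))))
          - (Real.tanh (k*(x+1)) - Real.tanh (k*(x+(-1)))))|
          + |k * γ * ((Real.tanh (k*(x+0)) - Real.tanh (k*(x+1)))
          + (Real.tanh (k*(x+0)) - Real.tanh (k*(x+(-1)))))| := abs_sub _ _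
      _ ≤ |kd| * (|x| * (β * E) + |x| * (β * E) + β * E) + k * |γ| * (β * E + β * E) := by
          rw [abs_mul, abs_mul, abs_mul, abs_of_pos hk]
          exact add_le_add (mul_le_mul_of_nonneg_left inner1 (abs_nonneg kd))
            (mul_le_mul_of_nonneg_left inner2 (by positivity))
  -- |Dp| bound
  have hDp : |(1 * k + c * kd) * (Real.tanh (k*(x+0)) - Real.tanh (k*(x+(-1))))
        + c * k * ((Real.cosh (k*(x+0)) ^ 2)⁻¹ * (kd * (x+0) + k * (-γ))
          - (Real.cosh (k*(x+(-1))) ^ 2)⁻¹ * (kd * (x+(-1)) + k * (-γ)))|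
      ≤ (k + c * |kd|) * (β * E)
        + c * k * (β' * E * (|kd| * |x| + k * |γ|) + β' * E * (|kd| * (|x| + 1) + k * |γ|)) := by
    have j0 : |(Real.cosh (k*(x+0)) ^ 2)⁻¹ * (kd * (x+0) + k * (-γ))|
        ≤ β' * E * (|kd| * |x| + k * |γ|) := by
      rw [abs_mul, abs_of_nonneg (by positivity : (0:ℝ) ≤ (Real.cosh (k*(x+0)) ^ 2)⁻¹)]
      have a1 : |kd * (x+0) + k * (-γ)| ≤ |kd| * |x| + k * |γ| := by
        calc |kd * (x+0) + k * (-γ)| ≤ |kd * (x+0)| + |k * (-γ)| := abs_add_le _ _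
          _ = |kd| * |x| + k * |γ| := by
              rw [abs_mul, abs_mul, abs_neg, abs_of_pos hk, show x + (0:ℝ) = x by ring]
      have a2 : (Real.cosh (k*(x+0)) ^ 2)⁻¹ ≤ β' * E := by rw [hβ'def, hEdef]; exact s0
      calc (Real.cosh (k*(x+0)) ^ 2)⁻¹ * |kd * (x+0) + k * (-γ)|
          ≤ (β' * E) * (|kd| * |x| + k * |γ|) :=
            mul_le_mul a2 a1 (abs_nonneg _) (by positivity)
        _ = β' * E * (|kd| * |x| + k * |γ|) := by ring
    have jm : |(Real.cosh (k*(x+(-1))) ^ 2)⁻¹ * (kd * (x+(-1)) + k * (-γ))|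
        ≤ β' * E * (|kd| * (|x| + 1) + k * |γ|) := by
      rw [abs_mul, abs_of_nonneg (by positivity : (0:ℝ) ≤ (Real.cosh (k*(x+(-1))) ^ 2)⁻¹)]
      have a1 : |kd * (x+(-1)) + k * (-γ)| ≤ |kd| * (|x| + 1) + k * |γ| := by
        calc |kd * (x+(-1)) + k * (-γ)| ≤ |kd * (x+(-1))| + |k * (-γ)| := abs_add_le _ _
          _ = |kd| * |x + (-1)| + k * |γ| := by rw [abs_mul, abs_mul, abs_neg, abs_of_pos hk]
          _ ≤ |kd| * (|x| + 1) + k * |γ| := by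
              have : |x + (-1:ℝ)| ≤ |x| + 1 := by
                calc |x + (-1:ℝ)| ≤ |x| + |(-1:ℝ)| := abs_add_le _ _
                  _ = |x| + 1 := by norm_num
              have := mul_le_mul_of_nonneg_left this (abs_nonneg kd)
              linarith
      have a2 : (Real.cosh (k*(x+(-1))) ^ 2)⁻¹ ≤ β' * E := by rw [hβ'def, hEdef]; exact sm
      calc (Real.cosh (k*(x+(-1))) ^ 2)⁻¹ * |kd * (x+(-1)) + k * (-γ)|
          ≤ (β' * E) * (|kd| * (|x| + 1) + k * |γ|) :=
            mul_le_mul a2 a1 (abs_nonneg _) (by positivity)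
        _ = β' * E * (|kd| * (|x| + 1) + k * |γ|) := by ring
    have b1 : |1 * k + c * kd| ≤ k + c * |kd| := by
      calc |1 * k + c * kd| ≤ |1 * k| + |c * kd| := abs_add_le _ _
        _ = k + c * |kd| := by
            simp [abs_mul, abs_of_pos hk, abs_of_pos hc0]
    have b2 : |(Real.cosh (k*(x+0)) ^ 2)⁻¹ * (kd * (x+0) + k * (-γ))
        - (Real.cosh (k*(x+(-1))) ^ 2)⁻¹ * (kd * (x+(-1)) + k * (-γ))|
        ≤ β' * E * (|kd| * |x| + k * |γ|) + β' * E * (|kd| * (|x| + 1) + k * |γ|) :=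
      (abs_sub _ _).trans (add_le_add j0 jm)
    calc _ ≤ |(1 * k + c * kd) * (Real.tanh (k*(x+0)) - Real.tanh (k*(x+(-1))))|
          + |c * k * ((Real.cosh (k*(x+0)) ^ 2)⁻¹ * (kd * (x+0) + k * (-γ))
            - (Real.cosh (k*(x+(-1))) ^ 2)⁻¹ * (kd * (x+(-1)) + k * (-γ)))| := abs_add_le _ _
      _ ≤ (k + c * |kd|) * (β * E)
          + c * k * (β' * E * (|kd| * |x| + k * |γ|)
            + β' * E * (|kd| * (|x| + 1) + k * |γ|)) := by
          rw [abs_mul, abs_mul, abs_mul, abs_of_pos hc0, abs_of_pos hk]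
          refine add_le_add (mul_le_mul b1 (by rw [hβdef, hEdef]; exact t0m) (abs_nonneg _)
            (by positivity)) (mul_le_mul_of_nonneg_left b2 (by positivity))
  -- combine
  have hxa : (0:ℝ) ≤ |x| := abs_nonneg x
  have hkd : (0:ℝ) ≤ |kd| := abs_nonneg kd
  have hγ : (0:ℝ) ≤ |γ| := abs_nonneg γ
  calc _ ≤ (|kd| * (|x| * (β * E) + |x| * (β * E) + β * E) + k * |γ| * (β * E + β * E))
        + ((k + c * |kd|) * (β * E)
          + c * k * (β' * E * (|kd| * |x| + k * |γ|) + β' * E * (|kd| * (|x| + 1) + k * |γ|))) :=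
        add_le_add hDr hDp
    _ ≤ ((2 * |kd| + 2 * k * |γ| + (k + c * |kd|)) * β
        + c * k * β' * (3 * |kd| + 2 * k * |γ|)) * (1 + |x|) * E := by
        have q1 : 0 ≤ β * E * (k * (|γ| * |x|)) :=
          mul_nonneg (mul_nonneg hβ hE.le) (mul_nonneg hk.le (mul_nonneg hγ hxa))
        have q2 : 0 ≤ β * E * (k * |x|) :=
          mul_nonneg (mul_nonneg hβ hE.le) (mul_nonneg hk.le hxa)
        have q3 : 0 ≤ β * E * (c * (|kd| * |x|)) :=
          mul_nonneg (mul_nonneg hβ hE.le) (mul_nonneg hc0.le (mul_nonneg hkd hxa))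
        have q4 : 0 ≤ c * k * β' * E * (|kd| * |x|) :=
          mul_nonneg (mul_nonneg (mul_nonneg (mul_nonneg hc0.le hk.le) hβ') hE.le)
            (mul_nonneg hkd hxa)
        have q5 : 0 ≤ c * k * β' * E * (k * (|γ| * |x|)) :=
          mul_nonneg (mul_nonneg (mul_nonneg (mul_nonneg hc0.le hk.le) hβ') hE.le)
            (mul_nonneg hk.le (mul_nonneg hγ hxa))
        have q6 : 0 ≤ c * k * β' * E * |kd| :=
          mul_nonneg (mul_nonneg (mul_nonneg (mul_nonneg hc0.le hk.le) hβ') hE.le) hkd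
        have q0 : 0 ≤ β * E * |kd| := mul_nonneg (mul_nonneg hβ hE.le) hkd
        nlinarith [q0, q1, q2, q3, q4, q5, q6]


lemma tail_sum_bound {w : ℤ → ℝ} {D b t : ℝ} (hb : 0 < b) (hD0 : 0 ≤ D)
    (hD : ∀ m : ℤ, |w m| ≤ D * Real.exp (-(b * |(m : ℝ) - t|))) (n : ℤ) :
    |∑' k : ℕ, w (n - (k : ℤ))| ≤
      D * max (Real.exp b * ∑' j : ℤ, Real.exp (-(b * |(j : ℝ)|))) ((1 - Real.exp (-b))⁻¹)
        * Real.exp (b * min ((n : ℝ) - t) 0) := by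
  set s : ℝ := (n : ℝ) - t with hsdef
  have hterm : ∀ k : ℕ, |w (n - (k : ℤ))| ≤ D * Real.exp (-(b * |s - (k : ℝ)|)) := by
    intro k
    have h := hD (n - (k : ℤ))
    have e : |((n - (k : ℤ) : ℤ) : ℝ) - t| = |s - (k : ℝ)| := by
      congr 1
      push_cast
      ring
    rwa [e] at h
  have hsum1 := summable_exp_shift_nat b s hb
  have hsumw : Summable (fun k : ℕ => |w (n - (k : ℤ))|) :=
    Summable.of_nonneg_of_le (fun k => abs_nonneg _) hterm (hsum1.mul_left D)
  have habs : |∑' k : ℕ, w (n - (k : ℤ))| ≤ ∑' k : ℕ, |w (n - (k : ℤ))| := by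
    simpa [Real.norm_eq_abs] using
      norm_tsum_le_tsum_norm (f := fun k : ℕ => w (n - (k : ℤ)))
        (by simpa [Real.norm_eq_abs] using hsumw)
  have h2 : ∑' k : ℕ, |w (n - (k : ℤ))| ≤ D * ∑' k : ℕ, Real.exp (-(b * |s - (k : ℝ)|)) := by
    rw [← tsum_mul_left]
    exact Summable.tsum_le_tsum hterm hsumw (hsum1.mul_left D)
  have hexplt1 : Real.exp (-b) < 1 := Real.exp_lt_one_iff.mpr (by linarith)
  have hcaseA := tsum_exp_shift_le b s hb
  have hcaseB : ∑' k : ℕ, Real.exp (-(b * |s - (k : ℝ)|)) ≤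
      Real.exp (b * s) * (1 - Real.exp (-b))⁻¹ := by
    have hterm2 : ∀ k : ℕ, Real.exp (-(b * |s - (k : ℝ)|)) ≤
        Real.exp (b * s) * Real.exp (-b) ^ k := by
      intro k
      rw [← Real.exp_nat_mul, ← Real.exp_add]
      apply Real.exp_le_exp.mpr
      have h3 := neg_abs_le (s - (k : ℝ))
      nlinarith [mul_le_mul_of_nonneg_left h3 hb.le]
    have hgeo : Summable (fun k : ℕ => Real.exp (b * s) * Real.exp (-b) ^ k) :=
      (summable_geometric_of_lt_one (Real.exp_nonneg _) hexplt1).mul_left _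
    calc ∑' k : ℕ, Real.exp (-(b * |s - (k : ℝ)|))
        ≤ ∑' k : ℕ, Real.exp (b * s) * Real.exp (-b) ^ k := Summable.tsum_le_tsum hterm2 hsum1 hgeo
      _ = Real.exp (b * s) * (1 - Real.exp (-b))⁻¹ := by
          rw [tsum_mul_left, tsum_geometric_of_lt_one (Real.exp_nonneg _) hexplt1]
  set M : ℝ := max (Real.exp b * ∑' j : ℤ, Real.exp (-(b * |(j : ℝ)|))) ((1 - Real.exp (-b))⁻¹)
    with hMdef
  rcases le_total 0 s with hs | hs
  · have hmin : min s 0 = 0 := min_eq_right hs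
    rw [hmin, mul_zero, Real.exp_zero, mul_one]
    calc |∑' k : ℕ, w (n - (k : ℤ))| ≤ D * ∑' k : ℕ, Real.exp (-(b * |s - (k : ℝ)|)) :=
          habs.trans h2
      _ ≤ D * M := mul_le_mul_of_nonneg_left (hcaseA.trans (le_max_left _ _)) hD0
  · have hmin : min s 0 = s := min_eq_left hs
    rw [hmin]
    have hMB : (1 - Real.exp (-b))⁻¹ ≤ M := le_max_right _ _
    calc |∑' k : ℕ, w (n - (k : ℤ))| ≤ D * ∑' k : ℕ, Real.exp (-(b * |s - (k : ℝ)|)) :=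
          habs.trans h2
      _ ≤ D * (Real.exp (b * s) * (1 - Real.exp (-b))⁻¹) :=
          mul_le_mul_of_nonneg_left hcaseB hD0
      _ ≤ D * (Real.exp (b * s) * M) := by
          exact mul_le_mul_of_nonneg_left
            (mul_le_mul_of_nonneg_left hMB (Real.exp_pos _).le) hD0
      _ = D * M * Real.exp (b * s) := by ring

lemma jinv_meml2w {u : ℤ → ℝ × ℝ} {D b t : ℝ} (hb : 0 < b) (hD0 : 0 ≤ D)
    (hD : ∀ m : ℤ, |(u m).1| + |(u m).2| ≤ D * Real.exp (-(b * |(m : ℝ) - t|)))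
    {a : ℝ} (ha0 : 0 < a) (hab : a < b) : Meml2w (-a) (Jinv u) := by
  set M : ℝ := max (Real.exp b * ∑' j : ℤ, Real.exp (-(b * |(j : ℝ)|))) ((1 - Real.exp (-b))⁻¹)
    with hMdef
  have hM : 0 ≤ M := by
    refine le_trans ?_ (le_max_right _ _)
    have h5 : Real.exp (-b) < 1 := Real.exp_lt_one_iff.mpr (by linarith)
    have : 0 < 1 - Real.exp (-b) := by linarith
    positivity
  have h1 : ∀ m : ℤ, |(u m).1| ≤ D * Real.exp (-(b * |(m : ℝ) - t|)) := fun m =>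
    (le_add_of_nonneg_right (abs_nonneg (u m).2)).trans (hD m)
  have h2 : ∀ m : ℤ, |(u m).2| ≤ D * Real.exp (-(b * |(m : ℝ) - t|)) := fun m =>
    (le_add_of_nonneg_left (abs_nonneg (u m).1)).trans (hD m)
  apply meml2w_neg_of_halfline hb (t := t) (E := 2 * (D * M)) ?_ ha0 hab
  intro n
  have c1 : |(Jinv u n).1| ≤ D * M * Real.exp (b * min ((n : ℝ) - t) 0) :=
    tail_sum_bound hb hD0 h2 n
  have c2' : |(Jinv u n).2| ≤ D * M * Real.exp (b * min (((n - 1 : ℤ) : ℝ) - t) 0) :=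
    tail_sum_bound hb hD0 h1 (n - 1)
  have c2 : |(Jinv u n).2| ≤ D * M * Real.exp (b * min ((n : ℝ) - t) 0) := by
    refine c2'.trans (mul_le_mul_of_nonneg_left (Real.exp_le_exp.mpr ?_)
      (mul_nonneg hD0 hM))
    apply mul_le_mul_of_nonneg_left ?_ hb.le
    apply min_le_min ?_ le_rfl
    push_cast
    linarith
  calc |(Jinv u n).1| + |(Jinv u n).2| ≤
        D * M * Real.exp (b * min ((n : ℝ) - t) 0)
          + D * M * Real.exp (b * min ((n : ℝ) - t) 0) := add_le_add c1 c2
    _ = 2 * (D * M) * Real.exp (b * min ((n : ℝ) - t) 0) := by ring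

lemma poly_absorb {K s δ : ℝ} (hs : 0 ≤ s) (hδ : 0 < δ) :
    (1 + s) * Real.exp (-(K * s)) ≤ (1 + δ⁻¹) * Real.exp (-((K - δ) * s)) := by
  have h1 : 1 + s ≤ (1 + δ⁻¹) * Real.exp (δ * s) := by
    have h2 : 1 + δ * s ≤ Real.exp (δ * s) := by
      have := Real.add_one_le_exp (δ * s)
      linarith
    have h3 : (1 + δ⁻¹) * (1 + δ * s) = 1 + δ⁻¹ + δ * s + s := by
      field_simp
      ring
    have h4 : (1 + δ⁻¹) * (1 + δ * s) ≤ (1 + δ⁻¹) * Real.exp (δ * s) :=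
      mul_le_mul_of_nonneg_left h2 (by positivity)
    nlinarith [mul_nonneg hδ.le hs, inv_nonneg.mpr hδ.le]
  calc (1 + s) * Real.exp (-(K * s)) ≤ ((1 + δ⁻¹) * Real.exp (δ * s)) * Real.exp (-(K * s)) :=
        mul_le_mul_of_nonneg_right h1 (Real.exp_pos _).le
    _ = (1 + δ⁻¹) * Real.exp (-((K - δ) * s)) := by
        rw [mul_assoc, ← Real.exp_add]
        ring_nf



/-- Exponential decay of the Toda soliton profile and its neutral modes. -/
theorem soliton_exponential_decay (c : ℝ) (hc : 1 < c) :
    (∃ C > (0:ℝ), ∀ x : ℝ,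
      |rtil c x| + |ptil c x| ≤ C * Real.exp (-(2 * kappa c * |x|))) ∧
    ∀ γ a : ℝ, 0 < a → a < 2 * kappa c →
      Meml2w a (uc c γ) ∧ Meml2w (-a) (uc c γ) ∧
      Meml2w a (ucDot c γ) ∧ Meml2w (-a) (ucDot c γ) ∧
      Meml2w a (ucDc c γ) ∧ Meml2w (-a) (ucDc c γ) ∧
      Meml2w (-a) (Jinv (ucDot c γ)) ∧ Meml2w (-a) (Jinv (ucDc c γ)) := by
  set k := kappa c with hkdef
  have hk : 0 < k := kappa_pos hc
  have hsinh4k : (0:ℝ) ≤ Real.sinh (4 * k) := Real.sinh_nonneg_iff.mpr (by linarith)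
  have hc0 : (0:ℝ) < c := by linarith
  set C₁ : ℝ := 2 * (Real.cosh (2 * k) - 1)
    + c * k * (4 * Real.sinh (4 * k) * Real.exp (4 * k)) + 1 with hC₁def
  have hsecond : 0 ≤ c * k * (4 * Real.sinh (4 * k) * Real.exp (4 * k)) :=
    mul_nonneg (by positivity) (mul_nonneg (mul_nonneg (by norm_num) hsinh4k)
      (Real.exp_pos _).le)
  have hC₁pos : 0 < C₁ := by
    have h1 := Real.one_le_cosh (2 * k)
    simp only [hC₁def]
    linarith
  have hpt : ∀ x : ℝ, |rtil c x| + |ptil c x| ≤ C₁ * Real.exp (-(2 * k * |x|)) := by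
    intro x
    have h1 := rtil_bound hc x
    have h2 := ptil_bound hc x
    have hE := Real.exp_pos (-(2 * k * |x|))
    simp only [hC₁def]
    nlinarith [hE.le]
  constructor
  · exact ⟨C₁, hC₁pos, hpt⟩
  · intro γ a ha0 ha2
    set t := c * γ with htdef
    have h2k : 0 < 2 * k := by linarith
    have haabs : |a| < 2 * k := by rwa [abs_of_pos ha0]
    have hnaabs : |(-a)| < 2 * k := by rwa [abs_neg, abs_of_pos ha0]
    have huc : ∀ n : ℤ, |(uc c γ n).1| + |(uc c γ n).2| ≤
        C₁ * Real.exp (-(2 * k * |(n : ℝ) - t|)) := fun n => hpt ((n : ℝ) - t)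
    -- ucDot pointwise bound
    set Cd : ℝ := 2 * k * (4 * Real.sinh (4 * k) * Real.exp (4 * k))
      + 2 * c * k ^ 2 * (4 * Real.exp (4 * k)) with hCddef
    have hCd0 : 0 ≤ Cd := by
      have h1 : 0 ≤ 2 * k * (4 * Real.sinh (4 * k) * Real.exp (4 * k)) :=
        mul_nonneg (by positivity) (mul_nonneg (mul_nonneg (by norm_num) hsinh4k)
          (Real.exp_pos _).le)
      have h2 : 0 ≤ 2 * c * k ^ 2 * (4 * Real.exp (4 * k)) := by positivity
      simp only [hCddef]
      linarith
    have hdot : ∀ n : ℤ, |(ucDot c γ n).1| + |(ucDot c γ n).2| ≤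
        (c * Cd) * Real.exp (-(2 * k * |(n : ℝ) - t|)) := by
      intro n
      have h := deriv_solProfile_bound hc ((n : ℝ) - t)
      have e1 : (ucDot c γ n).1 = (-c) * (deriv (solProfile c) ((n : ℝ) - t)).1 := rfl
      have e2 : (ucDot c γ n).2 = (-c) * (deriv (solProfile c) ((n : ℝ) - t)).2 := rfl
      rw [e1, e2, abs_mul, abs_mul, abs_neg, abs_of_pos hc0]
      calc c * |(deriv (solProfile c) ((n : ℝ) - t)).1|
            + c * |(deriv (solProfile c) ((n : ℝ) - t)).2|
          = c * (|(deriv (solProfile c) ((n : ℝ) - t)).1|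
            + |(deriv (solProfile c) ((n : ℝ) - t)).2|) := by ring
        _ ≤ c * (Cd * Real.exp (-(2 * k * |(n : ℝ) - t|))) :=
            mul_le_mul_of_nonneg_left h hc0.le
        _ = (c * Cd) * Real.exp (-(2 * k * |(n : ℝ) - t|)) := by ring
    -- ucDc pointwise bound
    set b' : ℝ := (a + 2 * k) / 2 with hb'def
    have hb'0 : 0 < b' := by simp only [hb'def]; linarith
    have hab' : a < b' := by simp only [hb'def]; linarith
    have hb'2k : b' < 2 * k := by simp only [hb'def]; linarith
    have hδ : 0 < 2 * k - b' := by linarith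
    set Dc : ℝ := (2 * |((Real.cosh k - c) / k)⁻¹|
          + 2 * k * |γ| + (k + c * |((Real.cosh k - c) / k)⁻¹|))
          * (4 * Real.sinh (4 * k) * Real.exp (4 * k))
        + c * k * (4 * Real.exp (4 * k))
          * (3 * |((Real.cosh k - c) / k)⁻¹| + 2 * k * |γ|) with hDcdef
    have hDc0 : 0 ≤ Dc := by
      have h1 : 0 ≤ 4 * Real.sinh (4 * k) * Real.exp (4 * k) :=
        mul_nonneg (mul_nonneg (by norm_num) hsinh4k) (Real.exp_pos _).le
      have h2 : 0 ≤ 2 * |((Real.cosh k - c) / k)⁻¹|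
          + 2 * k * |γ| + (k + c * |((Real.cosh k - c) / k)⁻¹|) := by
        have := mul_nonneg hk.le (abs_nonneg γ)
        have := mul_nonneg hc0.le (abs_nonneg (((Real.cosh k - c) / k)⁻¹))
        have := abs_nonneg (((Real.cosh k - c) / k)⁻¹)
        linarith
      have h3 : 0 ≤ c * k * (4 * Real.exp (4 * k)) := by positivity
      have h4 : 0 ≤ 3 * |((Real.cosh k - c) / k)⁻¹| + 2 * k * |γ| := by
        have := mul_nonneg hk.le (abs_nonneg γ)
        have := abs_nonneg (((Real.cosh k - c) / k)⁻¹)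
        linarith
      simp only [hDcdef]
      have := mul_nonneg h2 h1
      have := mul_nonneg h3 h4
      linarith
    have hdc : ∀ n : ℤ, |(ucDc c γ n).1| + |(ucDc c γ n).2| ≤
        (Dc * (1 + (2 * k - b')⁻¹)) * Real.exp (-(b' * |(n : ℝ) - t|)) := by
      intro n
      have h := ucDc_eq_and_bound hc γ n
      have habs := poly_absorb (K := 2 * k) (abs_nonneg ((n : ℝ) - t)) hδ
      have e : 2 * k - (2 * k - b') = b' := by ring
      rw [e] at habs
      calc |(ucDc c γ n).1| + |(ucDc c γ n).2|
          ≤ Dc * (1 + |(n : ℝ) - t|) * Real.exp (-(2 * k * |(n : ℝ) - t|)) := h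
        _ = Dc * ((1 + |(n : ℝ) - t|) * Real.exp (-(2 * k * |(n : ℝ) - t|))) := by ring
        _ ≤ Dc * ((1 + (2 * k - b')⁻¹) * Real.exp (-(b' * |(n : ℝ) - t|))) :=
            mul_le_mul_of_nonneg_left habs hDc0
        _ = (Dc * (1 + (2 * k - b')⁻¹)) * Real.exp (-(b' * |(n : ℝ) - t|)) := by ring
    have hDc'0 : 0 ≤ Dc * (1 + (2 * k - b')⁻¹) :=
      mul_nonneg hDc0 (by positivity)
    refine ⟨meml2w_of_pointwise h2k huc haabs,
      meml2w_of_pointwise h2k huc hnaabs,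
      meml2w_of_pointwise h2k hdot haabs,
      meml2w_of_pointwise h2k hdot hnaabs,
      meml2w_of_pointwise hb'0 hdc (by rwa [abs_of_pos ha0]),
      meml2w_of_pointwise hb'0 hdc (by rwa [abs_neg, abs_of_pos ha0]),
      jinv_meml2w h2k (mul_nonneg hc0.le hCd0) hdot ha0 ha2,
      jinv_meml2w hb'0 hDc'0 hdc ha0 hab'⟩


end

end TodaPaper
end

section
/- Boundedness and right-inverse property of J⁻¹ on the backward-weighted space: Let a > 0. For every (r,p) ∈ ℓ²_{−a} × ℓ²_{−a}, the series defining K(r,p) := ( Σ_{k=0}^∞ p(·−k), Σ_{k=1}^∞ r(·−k) ) converge absolutely at every n ∈ ℤ, K(r,p) ∈ ℓ²_{−a} × ℓ²_{−a} with ‖K(r,p)‖_{ℓ²_{−a}} ≤ (1 − e^{−a})^{−1} ‖(r,p)‖_{ℓ²_{−a}}, and J(K(r,p)) = (r,p), where J(r,p) := ( p(·+1) − p(·), r(·) − r(·−1) ). -/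
open Real Filter Set MeasureTheory

namespace TodaPaper

noncomputable section

/-- Weighted Schur-type bound for geometric convolution on `ℤ`. -/
private lemma schur_aux {r : ℝ} (hr0 : 0 ≤ r) (hr1 : r < 1) (w : ℤ → ℝ)
    (hw0 : ∀ n, 0 ≤ w n) (hw : Summable fun n : ℤ => w n ^ 2) :
    (∀ n : ℤ, Summable fun k : ℕ => r ^ k * w (n - k)) ∧
    Summable (fun n : ℤ => (∑' k : ℕ, r ^ k * w (n - k)) ^ 2) ∧
    ∑' n : ℤ, (∑' k : ℕ, r ^ k * w (n - k)) ^ 2 ≤ (1 - r)⁻¹ ^ 2 * ∑' n : ℤ, w n ^ 2 := by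
  have hM0 : (0:ℝ) ≤ (1 - r)⁻¹ := inv_nonneg.2 (by linarith)
  set W := ∑' n : ℤ, w n ^ 2 with hWdef
  have hW0 : 0 ≤ W := tsum_nonneg fun n => sq_nonneg _
  have hgeo : Summable fun k : ℕ => r ^ k := summable_geometric_of_lt_one hr0 hr1
  have hgsum : ∑' k : ℕ, r ^ k = (1 - r)⁻¹ := tsum_geometric_of_lt_one hr0 hr1
  have hshift : ∀ k : ℤ, Summable fun n : ℤ => w (n - k) ^ 2 := fun k =>
    hw.comp_injective (sub_left_injective)
  have hshiftsum : ∀ k : ℤ, ∑' n : ℤ, w (n - k) ^ 2 = W := fun k =>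
    Equiv.tsum_eq (Equiv.subRight k) (fun m => w m ^ 2)
  have hWbd : ∀ m : ℤ, w m ^ 2 ≤ W := fun m => hw.le_tsum m fun j _ => sq_nonneg _
  have hbd : ∀ m : ℤ, w m ≤ Real.sqrt W := fun m => by
    calc w m = Real.sqrt (w m ^ 2) := (Real.sqrt_sq (hw0 m)).symm
      _ ≤ Real.sqrt W := Real.sqrt_le_sqrt (hWbd m)
  have hpt : ∀ n : ℤ, Summable fun k : ℕ => r ^ k * w (n - k) := fun n =>
    Summable.of_nonneg_of_le (fun k => mul_nonneg (pow_nonneg hr0 _) (hw0 _))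
      (fun k => mul_le_mul_of_nonneg_left (hbd _) (pow_nonneg hr0 _))
      (hgeo.mul_right _)
  have hpt2 : ∀ n : ℤ, Summable fun k : ℕ => r ^ k * w (n - k) ^ 2 := fun n =>
    Summable.of_nonneg_of_le (fun k => mul_nonneg (pow_nonneg hr0 _) (sq_nonneg _))
      (fun k => mul_le_mul_of_nonneg_left (hWbd _) (pow_nonneg hr0 _)) (hgeo.mul_right _)
  have hh0 : ∀ n : ℤ, 0 ≤ ∑' k : ℕ, r ^ k * w (n - k) ^ 2 := fun n =>
    tsum_nonneg fun k => mul_nonneg (pow_nonneg hr0 _) (sq_nonneg _)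
  have hCS : ∀ n : ℤ, (∑' k : ℕ, r ^ k * w (n - k)) ^ 2 ≤
      (1 - r)⁻¹ * ∑' k : ℕ, r ^ k * w (n - k) ^ 2 := by
    intro n
    have hZ : 0 ≤ (1 - r)⁻¹ * ∑' k : ℕ, r ^ k * w (n - k) ^ 2 := mul_nonneg hM0 (hh0 n)
    have hle : (∑' k : ℕ, r ^ k * w (n - k)) ≤
        Real.sqrt ((1 - r)⁻¹ * ∑' k : ℕ, r ^ k * w (n - k) ^ 2) := by
      apply (hpt n).tsum_le_of_sum_le
      intro s
      have hs0 : 0 ≤ ∑ k ∈ s, r ^ k * w (n - k) :=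
        Finset.sum_nonneg fun k _ => mul_nonneg (pow_nonneg hr0 _) (hw0 _)
      rw [Real.le_sqrt hs0 hZ]
      calc (∑ k ∈ s, r ^ k * w (n - k)) ^ 2
          = (∑ k ∈ s, Real.sqrt (r ^ k) * (Real.sqrt (r ^ k) * w (n - k))) ^ 2 := by
            refine congrArg (· ^ 2) (Finset.sum_congr rfl fun k _ => ?_)
            rw [← mul_assoc, Real.mul_self_sqrt (pow_nonneg hr0 _)]
        _ ≤ (∑ k ∈ s, Real.sqrt (r ^ k) ^ 2) * ∑ k ∈ s, (Real.sqrt (r ^ k) * w (n - k)) ^ 2 :=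
            Finset.sum_mul_sq_le_sq_mul_sq s _ _
        _ = (∑ k ∈ s, r ^ k) * ∑ k ∈ s, r ^ k * w (n - k) ^ 2 := by
            congr 1
            · exact Finset.sum_congr rfl fun k _ => Real.sq_sqrt (pow_nonneg hr0 _)
            · exact Finset.sum_congr rfl fun k _ => by
                rw [mul_pow, Real.sq_sqrt (pow_nonneg hr0 _)]
        _ ≤ (1 - r)⁻¹ * ∑' k : ℕ, r ^ k * w (n - k) ^ 2 := by
            apply mul_le_mul ?_ ?_ ?_ hM0
            · rw [← hgsum]; exact Summable.sum_le_tsum s (fun k _ => pow_nonneg hr0 _) hgeo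
            · exact Summable.sum_le_tsum s (fun k _ => mul_nonneg (pow_nonneg hr0 _) (sq_nonneg _)) (hpt2 n)
            · exact Finset.sum_nonneg fun k _ => mul_nonneg (pow_nonneg hr0 _) (sq_nonneg _)
    calc (∑' k : ℕ, r ^ k * w (n - k)) ^ 2
        ≤ Real.sqrt ((1 - r)⁻¹ * ∑' k : ℕ, r ^ k * w (n - k) ^ 2) ^ 2 :=
          pow_le_pow_left₀ (tsum_nonneg fun k => mul_nonneg (pow_nonneg hr0 _) (hw0 _)) hle 2
      _ = (1 - r)⁻¹ * ∑' k : ℕ, r ^ k * w (n - k) ^ 2 := Real.sq_sqrt hZ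
  have hfin : ∀ s : Finset ℤ, ∑ n ∈ s, (∑' k : ℕ, r ^ k * w (n - k)) ^ 2 ≤ (1 - r)⁻¹ ^ 2 * W := by
    intro s
    have h2 : ∑ n ∈ s, ∑' k : ℕ, r ^ k * w (n - k) ^ 2
        = ∑' k : ℕ, ∑ n ∈ s, r ^ k * w (n - k) ^ 2 := (Summable.tsum_finsetSum fun n _ => hpt2 n).symm
    have h3 : ∀ k : ℕ, ∑ n ∈ s, r ^ k * w (n - k) ^ 2 ≤ r ^ k * W := by
      intro k
      rw [← Finset.mul_sum]
      refine mul_le_mul_of_nonneg_left ?_ (pow_nonneg hr0 _)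
      calc ∑ n ∈ s, w (n - (k:ℤ)) ^ 2 ≤ ∑' n : ℤ, w (n - (k:ℤ)) ^ 2 :=
            Summable.sum_le_tsum s (fun n _ => sq_nonneg _) (hshift k)
        _ = W := hshiftsum k
    have h4 : Summable fun k : ℕ => ∑ n ∈ s, r ^ k * w (n - k) ^ 2 :=
      Summable.of_nonneg_of_le
        (fun k => Finset.sum_nonneg fun n _ => mul_nonneg (pow_nonneg hr0 _) (sq_nonneg _))
        h3 (hgeo.mul_right W)
    have h5 : ∑' k : ℕ, ∑ n ∈ s, r ^ k * w (n - k) ^ 2 ≤ (1 - r)⁻¹ * W := by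
      calc ∑' k : ℕ, ∑ n ∈ s, r ^ k * w (n - k) ^ 2 ≤ ∑' k : ℕ, r ^ k * W :=
            Summable.tsum_le_tsum h3 h4 (hgeo.mul_right W)
        _ = (1 - r)⁻¹ * W := by rw [tsum_mul_right, hgsum]
    calc ∑ n ∈ s, (∑' k : ℕ, r ^ k * w (n - k)) ^ 2
        ≤ ∑ n ∈ s, (1 - r)⁻¹ * ∑' k : ℕ, r ^ k * w (n - k) ^ 2 :=
          Finset.sum_le_sum fun n _ => hCS n
      _ = (1 - r)⁻¹ * ∑ n ∈ s, ∑' k : ℕ, r ^ k * w (n - k) ^ 2 := (Finset.mul_sum _ _ _).symm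
      _ ≤ (1 - r)⁻¹ * ((1 - r)⁻¹ * W) := by
          rw [h2]; exact mul_le_mul_of_nonneg_left h5 hM0
      _ = (1 - r)⁻¹ ^ 2 * W := by ring
  have hsum2 : Summable (fun n : ℤ => (∑' k : ℕ, r ^ k * w (n - k)) ^ 2) :=
    summable_of_sum_le (fun n => sq_nonneg _) hfin
  exact ⟨hpt, hsum2, hsum2.tsum_le_of_sum_le hfin⟩

/-- Boundedness and right-inverse property of `J⁻¹` on the
backward-weighted space `ℓ²_{-a}`. -/
theorem Jinv_bounded_right_inverse (a : ℝ) (ha : 0 < a)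
    (u : ℤ → ℝ × ℝ) (hu : Meml2w (-a) u) :
    (∀ n : ℤ, Summable (fun k : ℕ => |(u (n - (k : ℤ))).2|) ∧
      Summable fun k : ℕ => |(u (n - 1 - (k : ℤ))).1|) ∧
    Meml2w (-a) (Jinv u) ∧
    wnorm (-a) (Jinv u) ≤ (1 - Real.exp (-a))⁻¹ * wnorm (-a) u ∧
    ∀ n : ℤ, ((Jinv u (n + 1)).2 - (Jinv u n).2,
      (Jinv u n).1 - (Jinv u (n - 1)).1) = u n := by
  have hr1 : Real.exp (-a) < 1 := Real.exp_lt_one_iff.mpr (by linarith)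
  set r := Real.exp (-a) with hrdef
  have hr0 : 0 ≤ r := (Real.exp_pos _).le
  have hM0 : (0:ℝ) ≤ (1 - r)⁻¹ := inv_nonneg.2 (by linarith)
  have hwt : ∀ n : ℤ, Real.exp (2 * -a * n) = Real.exp (-a * n) ^ 2 := fun n => by
    rw [sq, ← Real.exp_add]; congr 1; ring
  set w1 : ℤ → ℝ := fun n => Real.exp (-a * n) * |(u n).1| with hw1def
  set w2 : ℤ → ℝ := fun n => Real.exp (-a * n) * |(u n).2| with hw2def
  have hw1nn : ∀ n, 0 ≤ w1 n := fun n => mul_nonneg (Real.exp_pos _).le (abs_nonneg _)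
  have hw2nn : ∀ n, 0 ≤ w2 n := fun n => mul_nonneg (Real.exp_pos _).le (abs_nonneg _)
  have hsq1 : ∀ n : ℤ, w1 n ^ 2 = Real.exp (2 * -a * n) * (u n).1 ^ 2 := fun n => by
    rw [hw1def, mul_pow, sq_abs, hwt n]
  have hsq2 : ∀ n : ℤ, w2 n ^ 2 = Real.exp (2 * -a * n) * (u n).2 ^ 2 := fun n => by
    rw [hw2def, mul_pow, sq_abs, hwt n]
  have hu1 : Summable fun n : ℤ => w1 n ^ 2 :=
    Summable.of_nonneg_of_le (fun n => sq_nonneg _)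
      (fun n => by
        rw [hsq1]
        exact mul_le_mul_of_nonneg_left (le_add_of_nonneg_right (sq_nonneg _))
          (Real.exp_pos _).le) hu
  have hu2 : Summable fun n : ℤ => w2 n ^ 2 :=
    Summable.of_nonneg_of_le (fun n => sq_nonneg _)
      (fun n => by
        rw [hsq2]
        exact mul_le_mul_of_nonneg_left (le_add_of_nonneg_left (sq_nonneg _))
          (Real.exp_pos _).le) hu
  obtain ⟨hpt1, hsum1, hbd1⟩ := schur_aux hr0 hr1 w1 hw1nn hu1
  obtain ⟨hpt2, hsum2, hbd2⟩ := schur_aux hr0 hr1 w2 hw2nn hu2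
  have key : ∀ (n : ℤ) (k : ℕ) (x : ℝ),
      r ^ k * (Real.exp (-a * ((n - (k:ℤ) : ℤ) : ℝ)) * x) = Real.exp (-a * (n:ℝ)) * x := by
    intro n k x
    rw [hrdef, ← Real.exp_nat_mul, ← mul_assoc, ← Real.exp_add]
    congr 2
    push_cast
    ring
  have habs2 : ∀ n : ℤ, Summable fun k : ℕ => |(u (n - (k:ℤ))).2| := by
    intro n
    refine ((hpt2 n).mul_left (Real.exp (a * n))).congr fun k => ?_
    rw [hw2def]
    rw [key n k]
    rw [← mul_assoc, ← Real.exp_add, show a * (n:ℝ) + -a * n = 0 by ring, Real.exp_zero, one_mul]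
  have habs1 : ∀ n : ℤ, Summable fun k : ℕ => |(u (n - (k:ℤ))).1| := by
    intro n
    refine ((hpt1 n).mul_left (Real.exp (a * n))).congr fun k => ?_
    rw [hw1def]
    rw [key n k]
    rw [← mul_assoc, ← Real.exp_add, show a * (n:ℝ) + -a * n = 0 by ring, Real.exp_zero, one_mul]
  have hK1 : ∀ n : ℤ, Real.exp (-a * n) * |(Jinv u n).1| ≤ ∑' k : ℕ, r ^ k * w2 (n - k) := by
    intro n
    have h1 : |(Jinv u n).1| ≤ ∑' k : ℕ, |(u (n - (k:ℤ))).2| := by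
      simpa [Jinv] using norm_tsum_le_tsum_norm (f := fun k : ℕ => (u (n - (k:ℤ))).2)
        (by simpa using habs2 n)
    calc Real.exp (-a * n) * |(Jinv u n).1|
        ≤ Real.exp (-a * n) * ∑' k : ℕ, |(u (n - (k:ℤ))).2| :=
          mul_le_mul_of_nonneg_left h1 (Real.exp_pos _).le
      _ = ∑' k : ℕ, r ^ k * w2 (n - k) := by
          rw [← tsum_mul_left]
          exact tsum_congr fun k => by rw [hw2def, key n k]
  have hK2 : ∀ n : ℤ, Real.exp (-a * n) * |(Jinv u n).2| ≤ ∑' k : ℕ, r ^ k * w1 (n - k) := by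
    intro n
    have h1 : |(Jinv u n).2| ≤ ∑' k : ℕ, |(u (n - 1 - (k:ℤ))).1| := by
      simpa [Jinv] using norm_tsum_le_tsum_norm (f := fun k : ℕ => (u (n - 1 - (k:ℤ))).1)
        (by simpa using habs1 (n - 1))
    calc Real.exp (-a * n) * |(Jinv u n).2|
        ≤ Real.exp (-a * n) * ∑' k : ℕ, |(u (n - 1 - (k:ℤ))).1| :=
          mul_le_mul_of_nonneg_left h1 (Real.exp_pos _).le
      _ = ∑' k : ℕ, Real.exp (-a * n) * |(u (n - 1 - (k:ℤ))).1| := tsum_mul_left.symm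
      _ ≤ ∑' k : ℕ, r ^ k * w1 (n - k) := by
          refine Summable.tsum_le_tsum_of_inj (fun k => k + 1) (fun x y h => by simpa using h)
            (fun c _ => mul_nonneg (pow_nonneg hr0 _) (hw1nn _)) (fun k => ?_)
            ((habs1 (n - 1)).mul_left _) (hpt1 n)
          have hcast : (n : ℤ) - 1 - (k:ℤ) = n - ((k + 1 : ℕ) : ℤ) := by push_cast; ring
          rw [hcast, hw1def]
          exact le_of_eq (key n (k + 1) _).symm
  have hnsq : ∀ n : ℤ, Real.exp (2 * -a * n) * nsq (Jinv u n)
      ≤ (∑' k : ℕ, r ^ k * w2 (n - k)) ^ 2 + (∑' k : ℕ, r ^ k * w1 (n - k)) ^ 2 := by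
    intro n
    calc Real.exp (2 * -a * n) * nsq (Jinv u n)
        = (Real.exp (-a * n) * |(Jinv u n).1|) ^ 2 + (Real.exp (-a * n) * |(Jinv u n).2|) ^ 2 := by
          simp only [nsq, hwt n, mul_add, mul_pow, sq_abs]
      _ ≤ _ := add_le_add
          (pow_le_pow_left₀ (mul_nonneg (Real.exp_pos _).le (abs_nonneg _)) (hK1 n) 2)
          (pow_le_pow_left₀ (mul_nonneg (Real.exp_pos _).le (abs_nonneg _)) (hK2 n) 2)
  have hmem : Meml2w (-a) (Jinv u) :=
    Summable.of_nonneg_of_le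
      (fun n => mul_nonneg (Real.exp_pos _).le (add_nonneg (sq_nonneg _) (sq_nonneg _)))
      hnsq (hsum2.add hsum1)
  have hsplit : ∑' n : ℤ, Real.exp (2 * -a * n) * nsq (u n)
      = (∑' n : ℤ, w2 n ^ 2) + ∑' n : ℤ, w1 n ^ 2 := by
    rw [← Summable.tsum_add hu2 hu1]
    exact tsum_congr fun n => by simp only [nsq, mul_add, hsq1, hsq2]; ring
  have hT : ∑' n : ℤ, Real.exp (2 * -a * n) * nsq (Jinv u n)
      ≤ (1 - r)⁻¹ ^ 2 * ∑' n : ℤ, Real.exp (2 * -a * n) * nsq (u n) := by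
    calc ∑' n : ℤ, Real.exp (2 * -a * n) * nsq (Jinv u n)
        ≤ ∑' n : ℤ, ((∑' k : ℕ, r ^ k * w2 (n - k)) ^ 2 + (∑' k : ℕ, r ^ k * w1 (n - k)) ^ 2) :=
          Summable.tsum_le_tsum hnsq hmem (hsum2.add hsum1)
      _ = (∑' n : ℤ, (∑' k : ℕ, r ^ k * w2 (n - k)) ^ 2)
            + ∑' n : ℤ, (∑' k : ℕ, r ^ k * w1 (n - k)) ^ 2 := Summable.tsum_add hsum2 hsum1
      _ ≤ (1 - r)⁻¹ ^ 2 * (∑' n : ℤ, w2 n ^ 2) + (1 - r)⁻¹ ^ 2 * ∑' n : ℤ, w1 n ^ 2 :=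
          add_le_add hbd2 hbd1
      _ = (1 - r)⁻¹ ^ 2 * ∑' n : ℤ, Real.exp (2 * -a * n) * nsq (u n) := by
          rw [hsplit]; ring
  have hnorm : wnorm (-a) (Jinv u) ≤ (1 - Real.exp (-a))⁻¹ * wnorm (-a) u := by
    unfold wnorm
    calc Real.sqrt (∑' n : ℤ, Real.exp (2 * -a * n) * nsq (Jinv u n))
        ≤ Real.sqrt ((1 - r)⁻¹ ^ 2 * ∑' n : ℤ, Real.exp (2 * -a * n) * nsq (u n)) :=
          Real.sqrt_le_sqrt hT
      _ = (1 - r)⁻¹ * Real.sqrt (∑' n : ℤ, Real.exp (2 * -a * n) * nsq (u n)) := by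
          rw [Real.sqrt_mul (by positivity), Real.sqrt_sq hM0]
  have hinv : ∀ n : ℤ, ((Jinv u (n + 1)).2 - (Jinv u n).2,
      (Jinv u n).1 - (Jinv u (n - 1)).1) = u n := by
    intro n
    have hf : Summable fun k : ℕ => (u (n - (k:ℤ))).1 := by
      refine Summable.of_abs ?_
      exact habs1 n
    have hg : Summable fun k : ℕ => (u (n - (k:ℤ))).2 := Summable.of_abs (habs2 n)
    have h1 : (Jinv u (n + 1)).2 - (Jinv u n).2 = (u n).1 := by
      have hz := Summable.tsum_eq_zero_add hf
      simp only [Jinv]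
      rw [show ∑' k : ℕ, (u (n + 1 - 1 - (k:ℤ))).1 = ∑' k : ℕ, (u (n - (k:ℤ))).1 from
        tsum_congr fun k => by rw [show n + 1 - 1 - (k:ℤ) = n - (k:ℤ) by ring]]
      rw [show ∑' k : ℕ, (u (n - 1 - (k:ℤ))).1 = ∑' k : ℕ, (u (n - ((k + 1 : ℕ) : ℤ))).1 from
        tsum_congr fun k => by rw [show n - 1 - (k:ℤ) = n - ((k + 1 : ℕ) : ℤ) by push_cast; ring]]
      rw [hz]
      simp
    have h2 : (Jinv u n).1 - (Jinv u (n - 1)).1 = (u n).2 := by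
      have hz := Summable.tsum_eq_zero_add hg
      simp only [Jinv]
      rw [show ∑' k : ℕ, (u (n - 1 - (k:ℤ))).2 = ∑' k : ℕ, (u (n - ((k + 1 : ℕ) : ℤ))).2 from
        tsum_congr fun k => by rw [show n - 1 - (k:ℤ) = n - ((k + 1 : ℕ) : ℤ) by push_cast; ring]]
      rw [hz]
      simp
    exact Prod.ext h1 h2
  exact ⟨fun n => ⟨habs2 n, habs1 (n - 1)⟩, hmem, hnorm, hinv⟩

end

end TodaPaper
end

section
/- Uniform comparison of tanh increments with sech²: There exist a₀ > 0 and C > 0 such that for every a ∈ (0, a₀] and every x ∈ ℝ, | ( tanh(ax) − tanh(a(x−1)) ) / ( a sech²(ax) ) − 1 | ≤ C a. Equivalently, with ψ_a(x) = 1 + tanh(ax) and ψ̃_a(x) = a^{1/2} sech(ax), one has sup_{x∈ℝ} | (ψ_a(x) − ψ_a(x−1)) / ψ̃_a(x)² − 1 | = O(a) as a ↓ 0. -/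
open Real Filter Set MeasureTheory

namespace TodaPaper

noncomputable section

private lemma cosh_shift_le (v d : ℝ) : Real.cosh (v + d) ≤ Real.exp |d| * Real.cosh v := by
  have h1 : |Real.sinh v| ≤ Real.cosh v := by
    nlinarith [Real.cosh_sq v, sq_abs (Real.sinh v), Real.cosh_pos v, abs_nonneg (Real.sinh v)]
  have h2 : Real.sinh v * Real.sinh d ≤ Real.cosh v * Real.sinh |d| := by
    calc Real.sinh v * Real.sinh d ≤ |Real.sinh v| * |Real.sinh d| := le_abs_self _ |>.trans (abs_mul _ _).le
      _ ≤ Real.cosh v * Real.sinh |d| := by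
          rw [← Real.abs_sinh]
          exact mul_le_mul_of_nonneg_right h1 (abs_nonneg _)
  have h3 : Real.cosh d = Real.cosh |d| := (Real.cosh_abs d).symm
  have := Real.cosh_add_sinh |d|
  rw [Real.cosh_add]
  nlinarith [Real.cosh_pos v]

/-- Uniform comparison of tanh increments with sech². -/
theorem tanh_increment_comparison :
    ∃ a₀ > (0:ℝ), ∃ C > (0:ℝ), ∀ a : ℝ, 0 < a → a ≤ a₀ → ∀ x : ℝ,
      |(Real.tanh (a * x) - Real.tanh (a * (x - 1)))
          / (a * (1 / Real.cosh (a * x)) ^ 2) - 1| ≤ C * a := by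
  refine ⟨1, one_pos, 2 * Real.exp 2, by positivity, ?_⟩
  intro a ha ha1 x
  have hcx : (0:ℝ) < Real.cosh (a * x) := Real.cosh_pos _
  have hcy : (0:ℝ) < Real.cosh (a * (x - 1)) := Real.cosh_pos _
  have hsub : Real.tanh (a * x) - Real.tanh (a * (x - 1)) =
      Real.sinh a / (Real.cosh (a * x) * Real.cosh (a * (x - 1))) := by
    rw [Real.tanh_eq_sinh_div_cosh, Real.tanh_eq_sinh_div_cosh,
      div_sub_div _ _ hcx.ne' hcy.ne']
    congr 1
    rw [← Real.sinh_sub]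
    ring_nf
  set t : ℝ := Real.sinh a / a * (Real.cosh (a * x) / Real.cosh (a * (x - 1))) with ht
  have hexpr : (Real.tanh (a * x) - Real.tanh (a * (x - 1)))
      / (a * (1 / Real.cosh (a * x)) ^ 2) = t := by
    rw [hsub, ht]
    field_simp
  rw [hexpr]
  -- bounds on sinh a / a
  have hsinh_lb : a ≤ Real.sinh a := Real.self_le_sinh_iff.mpr ha.le
  have hsinh_ub : Real.sinh a ≤ a * Real.exp a := by
    have hprod : Real.exp a * Real.exp (-(2*a)) = Real.exp (-a) := by
      rw [← Real.exp_add]; ring_nf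
    rw [Real.sinh_eq]
    nlinarith [Real.add_one_le_exp (-(2*a)), Real.exp_pos a]
  -- bounds on cosh ratio
  have hr_ub : Real.cosh (a * x) ≤ Real.exp a * Real.cosh (a * (x - 1)) := by
    have := cosh_shift_le (a * (x - 1)) a
    rw [abs_of_pos ha] at this
    calc Real.cosh (a * x) = Real.cosh (a * (x - 1) + a) := by ring_nf
      _ ≤ _ := this
  have hr_lb : Real.cosh (a * (x - 1)) ≤ Real.exp a * Real.cosh (a * x) := by
    have := cosh_shift_le (a * x) (-a)
    rw [abs_neg, abs_of_pos ha] at this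
    calc Real.cosh (a * (x - 1)) = Real.cosh (a * x + -a) := by ring_nf
      _ ≤ _ := this
  have hea : (0:ℝ) < Real.exp a := Real.exp_pos a
  have ht_ub : t ≤ Real.exp (2 * a) := by
    have h1 : Real.sinh a / a ≤ Real.exp a := by
      rw [div_le_iff₀ ha]; linarith [hsinh_ub]
    have h2 : Real.cosh (a * x) / Real.cosh (a * (x - 1)) ≤ Real.exp a := by
      rw [div_le_iff₀ hcy]; linarith
    calc t ≤ Real.exp a * Real.exp a :=
          mul_le_mul h1 h2 (div_nonneg hcx.le hcy.le) hea.le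
      _ = Real.exp (2 * a) := by rw [← Real.exp_add]; ring_nf
  have ht_lb : Real.exp (-a) ≤ t := by
    have h1 : (1:ℝ) ≤ Real.sinh a / a := (one_le_div ha).mpr hsinh_lb
    have h2 : Real.exp (-a) ≤ Real.cosh (a * x) / Real.cosh (a * (x - 1)) := by
      rw [le_div_iff₀ hcy]
      have := mul_le_mul_of_nonneg_left hr_lb (Real.exp_pos (-a)).le
      have hone : Real.exp (-a) * Real.exp a = 1 := by
        rw [← Real.exp_add]; simp
      nlinarith [hcx.le]
    calc Real.exp (-a) = 1 * Real.exp (-a) := (one_mul _).symm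
      _ ≤ t := mul_le_mul h1 h2 (Real.exp_pos _).le
            (le_trans zero_le_one h1)
  rw [abs_le]
  have hexp2 : Real.exp (2 * a) ≤ Real.exp 2 := Real.exp_le_exp.mpr (by linarith)
  have hone_le : (1:ℝ) ≤ Real.exp 2 := Real.one_le_exp (by norm_num)
  constructor
  · -- 1 - t ≤ a ≤ 2 exp 2 * a
    have h1 : 1 - Real.exp (-a) ≤ a := by
      linarith [Real.add_one_le_exp (-a)]
    nlinarith
  · -- t - 1 ≤ exp(2a) - 1 ≤ 2a exp(2a) ≤ 2 exp 2 * a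
    have h1 : Real.exp (2 * a) - 1 ≤ 2 * a * Real.exp (2 * a) := by
      have hprod : Real.exp (2*a) * Real.exp (-(2*a)) = 1 := by
        rw [← Real.exp_add]; simp
      nlinarith [Real.add_one_le_exp (-(2*a)), Real.exp_pos (2*a)]
    nlinarith [Real.exp_pos (2*a)]

end

end TodaPaper
end
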